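/- arXiv:math/0610237 — 2 statements merged into one kernel-verified Lean document; each statement's English description precedes it below -/
import Mathlib

section
/- For every n ≥ 0, the number of Motzkin permutations of length n equals the n-th Motzkin number, i.e. |𝔐_n| = M_n. -/
/-- `π` avoids the classical pattern 132: no indices `i < j < k` with `π i < π k < π j`. -/
def Avoids132 {n : ℕ} (π : Equiv.Perm (Fin n)) : Prop :=
  ¬ ∃ i j k : Fin n, i < j ∧ j < k ∧ π i < π k ∧ π k < π j

/-- `π` avoids the generalized pattern 1-23: no indices `a < b` with `π a < π b < π (b+1)`. -/
def Avoids1_23 {n : ℕ} (π : Equiv.Perm (Fin n)) : Prop :=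
  ¬ ∃ (a b : Fin n) (h : (b : ℕ) + 1 < n), a < b ∧ π a < π b ∧ π b < π ⟨(b : ℕ) + 1, h⟩

/-- A Motzkin permutation avoids both 132 and 1-23. -/
def IsMotzkinPerm {n : ℕ} (π : Equiv.Perm (Fin n)) : Prop :=
  Avoids132 π ∧ Avoids1_23 π

/-- The Motzkin numbers: `M 0 = 1`, `M (n+1) = M n + ∑_{k=0}^{n-1} M k * M (n-1-k)`. -/
def motzkin : ℕ → ℕ
  | 0 => 1
  | n + 1 => motzkin n + ∑ k ∈ (Finset.range n).attach, motzkin k.1 * motzkin (n - 1 - k.1)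
decreasing_by
  · omega
  · have h := k.2; rw [Finset.mem_range] at h; omega
  · omega

namespace MZ

open Equiv Finset

/-! ### The two constructors -/

def permAFun {n : ℕ} (τ : Equiv.Perm (Fin n)) (i : Fin (n+1)) : Fin (n+1) :=
  if h : (i : ℕ) = 0 then Fin.last n
  else Fin.castSucc (τ ⟨(i : ℕ) - 1, by have := i.isLt; omega⟩)

variable {n : ℕ}

lemma valA0 (τ : Equiv.Perm (Fin n)) (i : Fin (n+1)) (h : (i : ℕ) = 0) :
    (permAFun τ i : ℕ) = n := by
  simp only [permAFun]; rw [dif_pos h]; rfl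

lemma valAS (τ : Equiv.Perm (Fin n)) (i : Fin (n+1)) (h : (i : ℕ) ≠ 0) :
    (permAFun τ i : ℕ) = (τ ⟨(i : ℕ) - 1, by have := i.isLt; omega⟩ : ℕ) := by
  simp only [permAFun]; rw [dif_neg h]; rfl

lemma permAFun_inj (τ : Equiv.Perm (Fin n)) : Function.Injective (permAFun τ) := by
  intro i j h
  unfold permAFun at h
  split_ifs at h with h1 h2 h2
  · exact Fin.ext (h1.trans h2.symm)
  · exfalso
    have h' := congrArg Fin.val h
    simp only [Fin.val_last, Fin.coe_castSucc] at h'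
    exact absurd h'.symm (Fin.isLt _).ne
  · exfalso
    have h' := congrArg Fin.val h
    simp only [Fin.val_last, Fin.coe_castSucc] at h'
    exact absurd h' (Fin.isLt _).ne
  · have := τ.injective (Fin.castSucc_injective n h)
    rw [Fin.mk.injEq] at this
    exact Fin.ext (by omega)

noncomputable def permA (τ : Equiv.Perm (Fin n)) : Equiv.Perm (Fin (n+1)) :=
  Equiv.ofBijective (permAFun τ) (Finite.injective_iff_bijective.mp (permAFun_inj τ))

lemma permA_apply (τ : Equiv.Perm (Fin n)) (i : Fin (n+1)) :
    permA τ i = permAFun τ i := rfl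

lemma bnd1 {n k : ℕ} (hk : k < n) (s : Fin k) : n - k + (s : ℕ) < n + 1 := by
  have := s.isLt; omega

lemma bnd2 {n k : ℕ} (t : Fin (n-1-k)) : (t : ℕ) < n + 1 := by
  have := t.isLt; omega

def permBFun (k : ℕ) (hk : k < n) (σ : Equiv.Perm (Fin k))
    (τ : Equiv.Perm (Fin (n-1-k))) (i : Fin (n+1)) : Fin (n+1) :=
  if h1 : (i : ℕ) < k then ⟨n - k + (σ ⟨(i : ℕ), h1⟩ : ℕ), bnd1 hk _⟩
  else if h2 : (i : ℕ) = k then ⟨n - 1 - k, by omega⟩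
  else if h3 : (i : ℕ) = k + 1 then ⟨n, by omega⟩
  else ⟨(τ ⟨(i : ℕ) - (k+2), by have := i.isLt; omega⟩ : ℕ), bnd2 _⟩

variable {k : ℕ} (hk : k < n) (σ : Equiv.Perm (Fin k)) (τ : Equiv.Perm (Fin (n-1-k)))

lemma valL (i : Fin (n+1)) (h : (i : ℕ) < k) :
    (permBFun k hk σ τ i : ℕ) = n - k + (σ ⟨(i : ℕ), h⟩ : ℕ) := by
  simp only [permBFun]; rw [dif_pos h]

lemma valK (i : Fin (n+1)) (h : (i : ℕ) = k) :
    (permBFun k hk σ τ i : ℕ) = n - 1 - k := by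
  simp only [permBFun]; rw [dif_neg (by omega), dif_pos h]

lemma valK1 (i : Fin (n+1)) (h : (i : ℕ) = k + 1) :
    (permBFun k hk σ τ i : ℕ) = n := by
  simp only [permBFun]; rw [dif_neg (by omega), dif_neg (by omega), dif_pos h]

lemma valR (i : Fin (n+1)) (h : k + 1 < (i : ℕ)) :
    (permBFun k hk σ τ i : ℕ) = (τ ⟨(i : ℕ) - (k+2), by have := i.isLt; omega⟩ : ℕ) := by
  simp only [permBFun]; rw [dif_neg (by omega), dif_neg (by omega), dif_neg (by omega)]

lemma valL_bounds (i : Fin (n+1)) (h : (i : ℕ) < k) :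
    n - k ≤ (permBFun k hk σ τ i : ℕ) ∧ (permBFun k hk σ τ i : ℕ) < n := by
  rw [valL hk σ τ i h]; have := (σ ⟨(i : ℕ), h⟩).isLt; omega

lemma valR_bounds (i : Fin (n+1)) (h : k + 1 < (i : ℕ)) :
    (permBFun k hk σ τ i : ℕ) < n - 1 - k := by
  rw [valR hk σ τ i h]; exact (τ _).isLt

lemma val_ge (i : Fin (n+1)) (h : (i : ℕ) ≤ k + 1) :
    n - 1 - k ≤ (permBFun k hk σ τ i : ℕ) := by
  rcases lt_or_ge (i : ℕ) k with hi | hi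
  · have := (valL_bounds hk σ τ i hi).1; omega
  rcases eq_or_lt_of_le hi with hi2 | hi2
  · rw [valK hk σ τ i hi2.symm]
  · rw [valK1 hk σ τ i (by omega)]; omega

lemma permBFun_inj : Function.Injective (permBFun k hk σ τ) := by
  intro i j h
  have hv : (permBFun k hk σ τ i : ℕ) = (permBFun k hk σ τ j : ℕ) := congrArg Fin.val h
  apply Fin.ext
  rcases lt_or_ge (i : ℕ) k with hi | hi' <;>
    rcases lt_or_ge (j : ℕ) k with hj | hj'
  · rw [valL hk σ τ i hi, valL hk σ τ j hj] at hv
    have h2 := σ.injective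
      (Fin.ext (by omega : ((σ ⟨(i:ℕ), hi⟩ : Fin k) : ℕ) = (σ ⟨(j:ℕ), hj⟩ : ℕ)))
    rw [Fin.mk.injEq] at h2; exact h2
  · exfalso
    have b1 := valL_bounds hk σ τ i hi
    rcases eq_or_lt_of_le hj' with hj | hj
    · rw [valK hk σ τ j hj.symm] at hv; omega
    rcases eq_or_lt_of_le (Nat.succ_le_of_lt hj) with hj2 | hj2
    · rw [valK1 hk σ τ j hj2.symm] at hv; omega
    · have := valR_bounds hk σ τ j hj2; omega
  · exfalso
    have b1 := valL_bounds hk σ τ j hj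
    rcases eq_or_lt_of_le hi' with hi | hi
    · rw [valK hk σ τ i hi.symm] at hv; omega
    rcases eq_or_lt_of_le (Nat.succ_le_of_lt hi) with hi2 | hi2
    · rw [valK1 hk σ τ i hi2.symm] at hv; omega
    · have := valR_bounds hk σ τ i hi2; omega
  · rcases eq_or_lt_of_le hi' with hi | hi <;> rcases eq_or_lt_of_le hj' with hj | hj
    · omega
    · exfalso; rw [valK hk σ τ i hi.symm] at hv
      rcases eq_or_lt_of_le (Nat.succ_le_of_lt hj) with hj2 | hj2
      · rw [valK1 hk σ τ j hj2.symm] at hv; omega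
      · have := valR_bounds hk σ τ j hj2; omega
    · exfalso; rw [valK hk σ τ j hj.symm] at hv
      rcases eq_or_lt_of_le (Nat.succ_le_of_lt hi) with hi2 | hi2
      · rw [valK1 hk σ τ i hi2.symm] at hv; omega
      · have := valR_bounds hk σ τ i hi2; omega
    rcases eq_or_lt_of_le (Nat.succ_le_of_lt hi) with hi2 | hi2 <;>
      rcases eq_or_lt_of_le (Nat.succ_le_of_lt hj) with hj2 | hj2
    · omega
    · exfalso; rw [valK1 hk σ τ i hi2.symm] at hv
      have := valR_bounds hk σ τ j hj2; omega
    · exfalso; rw [valK1 hk σ τ j hj2.symm] at hv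
      have := valR_bounds hk σ τ i hi2; omega
    · rw [valR hk σ τ i hi2, valR hk σ τ j hj2] at hv
      have h2 := τ.injective (Fin.ext hv)
      rw [Fin.mk.injEq] at h2
      have := i.isLt; have := j.isLt; omega

noncomputable def permB (k : ℕ) (hk : k < n) (σ : Equiv.Perm (Fin k))
    (τ : Equiv.Perm (Fin (n-1-k))) : Equiv.Perm (Fin (n+1)) :=
  Equiv.ofBijective _ (Finite.injective_iff_bijective.mp (permBFun_inj hk σ τ))

lemma permB_apply (i : Fin (n+1)) :
    permB k hk σ τ i = permBFun k hk σ τ i := rfl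

/-! ### The constructors produce Motzkin permutations -/

lemma motzkin_permA (τ : Equiv.Perm (Fin n)) (hτ : IsMotzkinPerm τ) :
    IsMotzkinPerm (permA τ) := by
  obtain ⟨hτ1, hτ2⟩ := hτ
  constructor
  · rintro ⟨i, j, l, hij, hjl, hv1, hv2⟩
    rw [permA_apply, permA_apply] at hv1 hv2
    rw [Fin.lt_def] at hij hjl hv1 hv2
    by_cases hi : (i : ℕ) = 0
    · rw [valA0 τ i hi] at hv1
      have h1 := (τ ⟨(l : ℕ) - 1, by have := l.isLt; omega⟩).isLt
      rw [valAS τ l (by omega)] at hv1; omega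
    · have hj : (j : ℕ) ≠ 0 := by omega
      have hl : (l : ℕ) ≠ 0 := by omega
      rw [valAS τ i hi, valAS τ l hl] at hv1
      rw [valAS τ l hl, valAS τ j hj] at hv2
      exact hτ1 ⟨⟨(i : ℕ) - 1, by have := i.isLt; omega⟩,
        ⟨(j : ℕ) - 1, by have := j.isLt; omega⟩,
        ⟨(l : ℕ) - 1, by have := l.isLt; omega⟩,
        by rw [Fin.lt_def]; simp; omega, by rw [Fin.lt_def]; simp; omega,
        by rw [Fin.lt_def]; exact hv1, by rw [Fin.lt_def]; exact hv2⟩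
  · rintro ⟨a, b, hb, hab, hv1, hv2⟩
    rw [permA_apply, permA_apply] at hv1
    rw [permA_apply, permA_apply] at hv2
    rw [Fin.lt_def] at hab hv1 hv2
    by_cases ha : (a : ℕ) = 0
    · rw [valA0 τ a ha] at hv1
      have h1 := (τ ⟨(b : ℕ) - 1, by have := b.isLt; omega⟩).isLt
      rw [valAS τ b (by omega)] at hv1; omega
    · have hbn : (b : ℕ) ≠ 0 := by omega
      rw [valAS τ a ha, valAS τ b hbn] at hv1
      rw [valAS τ b hbn, valAS τ ⟨(b : ℕ) + 1, hb⟩ (by simp)] at hv2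
      have hidx : (⟨((⟨(b : ℕ) + 1, hb⟩ : Fin (n+1)) : ℕ) - 1, by simp; omega⟩ : Fin n) =
          ⟨((⟨(b : ℕ) - 1, by omega⟩ : Fin n) : ℕ) + 1, by simp; omega⟩ :=
        Fin.ext (by simp; omega)
      rw [hidx] at hv2
      exact hτ2 ⟨⟨(a : ℕ) - 1, by omega⟩, ⟨(b : ℕ) - 1, by omega⟩,
        by simp; omega, by rw [Fin.lt_def]; simp; omega,
        by rw [Fin.lt_def]; exact hv1, by rw [Fin.lt_def]; exact hv2⟩

lemma motzkin_permB (hσ : IsMotzkinPerm σ) (hτ : IsMotzkinPerm τ) :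
    IsMotzkinPerm (permB k hk σ τ) := by
  obtain ⟨hσ1, hσ2⟩ := hσ
  obtain ⟨hτ1, hτ2⟩ := hτ
  constructor
  · rintro ⟨i, j, l, hij, hjl, hv1, hv2⟩
    rw [permB_apply, permB_apply] at hv1 hv2
    rw [Fin.lt_def] at hij hjl hv1 hv2
    rcases lt_or_ge (l : ℕ) k with hl | hl
    · have hi : (i : ℕ) < k := by omega
      have hj : (j : ℕ) < k := by omega
      rw [valL hk σ τ i hi, valL hk σ τ l hl] at hv1
      rw [valL hk σ τ l hl, valL hk σ τ j hj] at hv2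
      exact hσ1 ⟨⟨i, hi⟩, ⟨j, hj⟩, ⟨l, hl⟩, by rw [Fin.lt_def]; exact hij,
        by rw [Fin.lt_def]; exact hjl, by rw [Fin.lt_def]; omega, by rw [Fin.lt_def]; omega⟩
    rcases eq_or_lt_of_le hl with hl2 | hl2
    · have hi : (i : ℕ) < k := by omega
      rw [valK hk σ τ l hl2.symm] at hv1
      have := (valL_bounds hk σ τ i hi).1; omega
    rcases eq_or_lt_of_le (Nat.succ_le_of_lt hl2) with hl3 | hl3
    · rw [valK1 hk σ τ l hl3.symm] at hv2
      have := (permBFun k hk σ τ j).isLt; omega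
    · have hvl := valR_bounds hk σ τ l hl3
      have hi : k + 1 < (i : ℕ) := by
        by_contra hcon
        have := val_ge hk σ τ i (by omega); omega
      have hj : k + 1 < (j : ℕ) := by omega
      rw [valR hk σ τ i hi, valR hk σ τ l hl3] at hv1
      rw [valR hk σ τ l hl3, valR hk σ τ j hj] at hv2
      refine hτ1 ⟨⟨(i : ℕ) - (k+2), by have := i.isLt; omega⟩,
        ⟨(j : ℕ) - (k+2), by have := j.isLt; omega⟩,
        ⟨(l : ℕ) - (k+2), by have := l.isLt; omega⟩,
        by rw [Fin.lt_def]; simp; omega, by rw [Fin.lt_def]; simp; omega,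
        by rw [Fin.lt_def]; exact hv1, by rw [Fin.lt_def]; exact hv2⟩
  · rintro ⟨a, b, hb, hab, hv1, hv2⟩
    rw [permB_apply, permB_apply] at hv1
    rw [permB_apply, permB_apply] at hv2
    rw [Fin.lt_def] at hab hv1 hv2
    rcases lt_or_ge ((b : ℕ) + 1) k with hbk | hbk
    · have ha : (a : ℕ) < k := by omega
      have hbL : (b : ℕ) < k := by omega
      rw [valL hk σ τ a ha, valL hk σ τ b hbL] at hv1
      rw [valL hk σ τ b hbL, valL hk σ τ ⟨(b : ℕ) + 1, _⟩ hbk] at hv2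
      have hidx : (⟨(⟨(b : ℕ), hbL⟩ : Fin k) + 1, hbk⟩ : Fin k) =
          ⟨((⟨(b : ℕ) + 1, hb⟩ : Fin (n+1)) : ℕ), hbk⟩ := Fin.ext rfl
      exact hσ2 ⟨⟨a, ha⟩, ⟨b, hbL⟩, hbk, by rw [Fin.lt_def]; exact hab,
        by rw [Fin.lt_def]; omega, by rw [Fin.lt_def, hidx]; omega⟩
    rcases eq_or_lt_of_le hbk with hbk2 | hbk2
    · have hbL : (b : ℕ) < k := by omega
      rw [valL hk σ τ b hbL, valK hk σ τ ⟨(b : ℕ) + 1, _⟩ hbk2.symm] at hv2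
      have := (σ ⟨(b : ℕ), hbL⟩).isLt; omega
    rcases eq_or_lt_of_le (Nat.succ_le_of_lt hbk2) with hbk3 | hbk3
    · have hbeq : (b : ℕ) = k := by omega
      have ha : (a : ℕ) < k := by omega
      rw [valL hk σ τ a ha, valK hk σ τ b hbeq] at hv1
      have := (valL_bounds hk σ τ a ha).1; omega
    rcases eq_or_lt_of_le (Nat.succ_le_of_lt hbk3) with hbk4 | hbk4
    · rw [valK1 hk σ τ b (by omega)] at hv2
      have := (permBFun k hk σ τ ⟨(b : ℕ) + 1, hb⟩).isLt; omega
    · have hbR : k + 1 < (b : ℕ) := by omega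
      have hvb := valR_bounds hk σ τ b hbR
      have ha : k + 1 < (a : ℕ) := by
        by_contra hcon
        have := val_ge hk σ τ a (by omega); omega
      rw [valR hk σ τ a ha, valR hk σ τ b hbR] at hv1
      rw [valR hk σ τ b hbR, valR hk σ τ ⟨(b : ℕ) + 1, _⟩ (by simp; omega)] at hv2
      have hidx : (⟨((⟨(b : ℕ) + 1, hb⟩ : Fin (n+1)) : ℕ) - (k+2), by simp; omega⟩ :
          Fin (n-1-k)) = ⟨((b : ℕ) - (k+2)) + 1, by omega⟩ := Fin.ext (by simp; omega)
      rw [hidx] at hv2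
      refine hτ2 ⟨⟨(a : ℕ) - (k+2), by omega⟩, ⟨(b : ℕ) - (k+2), by omega⟩,
        by simp; omega, by rw [Fin.lt_def]; simp; omega,
        by rw [Fin.lt_def]; exact hv1, by rw [Fin.lt_def]; exact hv2⟩

lemma emb1 {n k : ℕ} (hk : k < n) (s : Fin k) : (s : ℕ) < n + 1 := by
  have := s.isLt; omega

lemma emb2 {n k : ℕ} (t : Fin (n-1-k)) : k + 2 + (t : ℕ) < n + 1 := by
  have := t.isLt; omega

lemma emb3 {n : ℕ} (s : Fin n) : (s : ℕ) + 1 < n + 1 := by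
  have := s.isLt; omega

set_option maxHeartbeats 2000000 in
lemma decompose (π : Equiv.Perm (Fin (n+1))) (hπ : IsMotzkinPerm π) :
    (∃ τ, IsMotzkinPerm τ ∧ π = permA τ) ∨
    (∃ (k : ℕ) (hk : k < n) (σ : Equiv.Perm (Fin k)) (τ : Equiv.Perm (Fin (n-1-k))),
      IsMotzkinPerm σ ∧ IsMotzkinPerm τ ∧ π = permB k hk σ τ) := by
  obtain ⟨h132, h123⟩ := hπ
  set p : Fin (n+1) := π.symm (Fin.last n) with hp
  have hπp : π p = Fin.last n := π.apply_symm_apply _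
  have hvne : ∀ i : Fin (n+1), i ≠ p → (π i : ℕ) < n := by
    intro i hi
    have h1 : π i ≠ Fin.last n := fun h => hi (by rw [← hπp] at h; exact π.injective h)
    have h2 := (π i).isLt
    have h3 : (π i : ℕ) ≠ n := fun h => h1 (Fin.ext (by rw [h]; rfl))
    omega
  have step1 : ∀ i l : Fin (n+1), i < p → p < l → (π l : ℕ) < (π i : ℕ) := by
    intro i l hi hl
    by_contra hcon
    push_neg at hcon
    have hne : (π i : ℕ) ≠ (π l : ℕ) := by
      intro h
      have h2 := π.injective (Fin.ext h)
      subst h2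
      exact absurd hl (lt_asymm hi)
    have h2 : (π l : ℕ) < (π p : ℕ) := by
      rw [hπp, Fin.val_last]
      exact hvne l (ne_of_gt hl)
    exact h132 ⟨i, p, l, hi, hl, Fin.lt_def.mpr (by omega), Fin.lt_def.mpr h2⟩
  have step2 : ∀ l : Fin (n+1), p < l → (π l : ℕ) < n - (p : ℕ) := by
    intro l hl
    have hsub : (Finset.Iio p).image π ∪ {Fin.last n} ⊆ Finset.Ioi (π l) := by
      intro x hx
      rw [Finset.mem_union, Finset.mem_image] at hx
      rcases hx with ⟨i, hi, rfl⟩ | hx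
      · rw [Finset.mem_Iio] at hi
        exact Finset.mem_Ioi.mpr (Fin.lt_def.mpr (step1 i l hi hl))
      · rw [Finset.mem_singleton] at hx
        subst hx
        refine Finset.mem_Ioi.mpr (Fin.lt_def.mpr ?_)
        rw [Fin.val_last]
        exact hvne l (ne_of_gt hl)
    have hdisj : Fin.last n ∉ (Finset.Iio p).image π := by
      rw [Finset.mem_image]
      rintro ⟨i, hi, hlast⟩
      rw [Finset.mem_Iio] at hi
      have h2 : i = p := π.injective (hlast.trans hπp.symm)
      subst h2
      exact absurd hi (lt_irrefl _)
    have hcard := Finset.card_le_card hsub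
    rw [Finset.card_union_of_disjoint (Finset.disjoint_singleton_right.mpr hdisj),
      Finset.card_image_of_injective _ π.injective, Fin.card_Iio, Finset.card_singleton,
      Fin.card_Ioi] at hcard
    omega
  have hple : (p : ℕ) ≤ n := by have := p.isLt; omega
  have step3 : ∀ v : Fin (n+1), (v : ℕ) < n - (p : ℕ) → p < π.symm v := by
    intro v hv
    have hSsub : (Finset.Ioi p).image π ⊆
        Finset.Iio (⟨n - (p : ℕ), by omega⟩ : Fin (n+1)) := by
      intro x hx
      rw [Finset.mem_image] at hx
      obtain ⟨l, hl, rfl⟩ := hx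
      rw [Finset.mem_Ioi] at hl
      exact Finset.mem_Iio.mpr (Fin.lt_def.mpr (step2 l hl))
    have hSc : ((Finset.Ioi p).image π).card = n - (p : ℕ) := by
      rw [Finset.card_image_of_injective _ π.injective, Fin.card_Ioi]; omega
    have hIc : (Finset.Iio (⟨n - (p : ℕ), by omega⟩ : Fin (n+1))).card = n - (p : ℕ) :=
      Fin.card_Iio _
    have hEq := Finset.eq_of_subset_of_card_le hSsub (by rw [hSc, hIc])
    have hvmem : v ∈ (Finset.Ioi p).image π := by
      rw [hEq, Finset.mem_Iio, Fin.lt_def]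
      exact hv
    rw [Finset.mem_image] at hvmem
    obtain ⟨l, hl, rfl⟩ := hvmem
    rw [Finset.mem_Ioi] at hl
    rw [Equiv.symm_apply_apply]
    exact hl
  have step4 : ∀ i : Fin (n+1), i < p → n - (p : ℕ) ≤ (π i : ℕ) := by
    intro i hi
    by_contra hcon
    push_neg at hcon
    have h2 := step3 (π i) hcon
    rw [Equiv.symm_apply_apply] at h2
    exact absurd hi (lt_asymm h2)
  rcases Nat.eq_zero_or_pos (p : ℕ) with hp0 | hppos
  · -- Case A: the maximum is at position 0
    left
    have hfbnd : ∀ s : Fin n, (π ⟨(s : ℕ) + 1, emb3 s⟩ : ℕ) < n := by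
      intro s
      have h2 := step2 ⟨(s : ℕ) + 1, emb3 s⟩ (Fin.lt_def.mpr (by simp; omega))
      omega
    set f : Fin n → Fin n :=
      fun s => ⟨(π ⟨(s : ℕ) + 1, emb3 s⟩ : ℕ), hfbnd s⟩ with hf
    have hfinj : Function.Injective f := by
      intro s t hst
      rw [Fin.mk.injEq] at hst
      have h2 := π.injective (Fin.ext hst)
      rw [Fin.mk.injEq] at h2
      exact Fin.ext (by omega)
    set τ : Equiv.Perm (Fin n) :=
      Equiv.ofBijective f (Finite.injective_iff_bijective.mp hfinj) with hτdef
    have hτval : ∀ (s : Fin n) (q : Fin (n+1)), (q : ℕ) = (s : ℕ) + 1 →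
        (π q : ℕ) = (τ s : ℕ) := by
      intro s q hq
      have h1 : (τ s : ℕ) = (π (⟨(s : ℕ) + 1, emb3 s⟩ : Fin (n+1)) : ℕ) := rfl
      have h2 : q = (⟨(s : ℕ) + 1, emb3 s⟩ : Fin (n+1)) := Fin.ext hq
      rw [h2, h1]
    have heq : π = permA τ := by
      apply Equiv.ext
      intro i
      apply Fin.ext
      rw [permA_apply]
      by_cases hi : (i : ℕ) = 0
      · rw [valA0 τ i hi]
        have h2 : i = p := Fin.ext (by omega)
        rw [h2, hπp, Fin.val_last]
      · rw [valAS τ i hi]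
        exact hτval ⟨(i : ℕ) - 1, by have := i.isLt; omega⟩ i (by simp; omega)
    refine ⟨τ, ⟨?_, ?_⟩, heq⟩
    · rintro ⟨a, b, c, hab, hbc, hv1, hv2⟩
      rw [Fin.lt_def] at hab hbc hv1 hv2
      have ea := hτval a ⟨(a : ℕ) + 1, emb3 a⟩ rfl
      have eb := hτval b ⟨(b : ℕ) + 1, emb3 b⟩ rfl
      have ec := hτval c ⟨(c : ℕ) + 1, emb3 c⟩ rfl
      exact h132 ⟨⟨(a : ℕ) + 1, emb3 a⟩,
        ⟨(b : ℕ) + 1, emb3 b⟩,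
        ⟨(c : ℕ) + 1, emb3 c⟩,
        Fin.lt_def.mpr (by simp; omega), Fin.lt_def.mpr (by simp; omega),
        Fin.lt_def.mpr (by omega), Fin.lt_def.mpr (by omega)⟩
    · rintro ⟨a, b, hble, hab, hv1, hv2⟩
      rw [Fin.lt_def] at hab hv1 hv2
      have ea := hτval a ⟨(a : ℕ) + 1, emb3 a⟩ rfl
      have hP : ((⟨(b : ℕ) + 1, emb3 b⟩ : Fin (n+1)) : ℕ) + 1 < n + 1 := by simp; omega
      have eb := hτval b ⟨(b : ℕ) + 1, emb3 b⟩ rfl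
      have eb1 := hτval ⟨(b : ℕ) + 1, hble⟩
        ⟨((⟨(b : ℕ) + 1, emb3 b⟩ : Fin (n+1)) : ℕ) + 1, hP⟩ rfl
      exact h123 ⟨⟨(a : ℕ) + 1, emb3 a⟩,
        ⟨(b : ℕ) + 1, emb3 b⟩, hP,
        Fin.lt_def.mpr (by simp; omega), Fin.lt_def.mpr (by omega),
        Fin.lt_def.mpr (by omega)⟩
  · -- Case B: the maximum is at position k+1
    set k : ℕ := (p : ℕ) - 1 with hkdef
    have hpk : (p : ℕ) = k + 1 := by omega
    have hk : k < n := by omega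
    set km : Fin (n+1) := ⟨k, by omega⟩ with hkm
    have hkmv : (km : ℕ) = k := rfl
    have hkmp : km < p := Fin.lt_def.mpr (by omega)
    have hkmnep : km ≠ p := fun h => by
      have := congrArg Fin.val h; omega
    have hminl : ∀ a : Fin (n+1), (a : ℕ) < k → (π km : ℕ) < (π a : ℕ) := by
      intro a ha
      by_contra hcon
      push_neg at hcon
      have hne : (π a : ℕ) ≠ (π km : ℕ) := by
        intro h
        have h2 := congrArg Fin.val (π.injective (Fin.ext h))
        omega
      have key : ∀ q : Fin (n+1), (q : ℕ) = (km : ℕ) + 1 → (π km : ℕ) < (π q : ℕ) := by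
        intro q hq
        have h2 : q = p := Fin.ext (by omega)
        rw [h2, hπp, Fin.val_last]
        exact hvne km hkmnep
      exact h123 ⟨a, km, (by omega), Fin.lt_def.mpr (by omega),
        Fin.lt_def.mpr (by omega), Fin.lt_def.mpr (key _ rfl)⟩
    have hge : n - 1 - k ≤ (π km : ℕ) := by
      have := step4 km hkmp
      omega
    have hmin : (π km : ℕ) = n - 1 - k := by
      by_contra hne2
      set i : Fin (n+1) := π.symm ⟨n - 1 - k, by omega⟩ with hi
      have hπi : π i = ⟨n - 1 - k, by omega⟩ := π.apply_symm_apply _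
      have hvi : (π i : ℕ) = n - 1 - k := by rw [hπi]
      have hnp : i ≠ p := by
        intro h
        rw [h, hπp, Fin.val_last] at hvi
        omega
      have hnpi : ¬ p < i := by
        intro h
        have := step2 i h
        omega
      have hilt : i < p := lt_of_le_of_ne (not_lt.mp hnpi) hnp
      rw [Fin.lt_def] at hilt
      rcases Nat.lt_or_ge (i : ℕ) k with h2 | h2
      · have := hminl i h2
        omega
      · have h3 : i = km := Fin.ext (by omega)
        rw [h3] at hvi
        omega
    have hR : ∀ i : Fin (n+1), k + 1 < (i : ℕ) → (π i : ℕ) < n - 1 - k := by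
      intro i hi
      have := step2 i (Fin.lt_def.mpr (by omega))
      omega
    have hL : ∀ i : Fin (n+1), (i : ℕ) < k → n - k ≤ (π i : ℕ) ∧ (π i : ℕ) < n := by
      intro i hi
      have h1 := step4 i (Fin.lt_def.mpr (by omega))
      have h2 := hvne i (by intro h; have := congrArg Fin.val h; omega)
      have h3 : (π i : ℕ) ≠ n - 1 - k := by
        intro h
        have h4 := congrArg Fin.val (π.injective (Fin.ext (h.trans hmin.symm)))
        omega
      omega
    have hσb : ∀ s : Fin k, (π ⟨(s : ℕ), emb1 hk s⟩ : ℕ) - (n - k) < k := by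
      intro s
      have := hL ⟨(s : ℕ), emb1 hk s⟩ s.isLt
      omega
    set f : Fin k → Fin k :=
      fun s => ⟨(π ⟨(s : ℕ), emb1 hk s⟩ : ℕ) - (n - k), hσb s⟩ with hf
    have hfinj : Function.Injective f := by
      intro s t hst
      rw [Fin.mk.injEq] at hst
      have hs := hL ⟨(s : ℕ), emb1 hk s⟩ s.isLt
      have ht := hL ⟨(t : ℕ), emb1 hk t⟩ t.isLt
      have h2 := π.injective (Fin.ext (by omega :
        (π (⟨(s : ℕ), emb1 hk s⟩ : Fin (n+1)) : ℕ) =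
        (π (⟨(t : ℕ), emb1 hk t⟩ : Fin (n+1)) : ℕ)))
      rw [Fin.mk.injEq] at h2
      exact Fin.ext h2
    set σ : Equiv.Perm (Fin k) :=
      Equiv.ofBijective f (Finite.injective_iff_bijective.mp hfinj) with hσdef
    have hσval : ∀ (s : Fin k) (q : Fin (n+1)), (q : ℕ) = (s : ℕ) →
        (π q : ℕ) = n - k + (σ s : ℕ) := by
      intro s q hq
      have h1 : (σ s : ℕ) =
          (π (⟨(s : ℕ), emb1 hk s⟩ : Fin (n+1)) : ℕ) - (n - k) := rfl
      have h2 : q = (⟨(s : ℕ), emb1 hk s⟩ : Fin (n+1)) := Fin.ext hq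
      have h3 := hL (⟨(s : ℕ), emb1 hk s⟩ : Fin (n+1)) s.isLt
      rw [h2, h1]
      omega
    have hτb : ∀ t : Fin (n-1-k),
        (π ⟨k + 2 + (t : ℕ), emb2 t⟩ : ℕ) < n - 1 - k := by
      intro t
      exact hR _ (by omega : k + 1 < k + 2 + (t : ℕ))
    set g : Fin (n-1-k) → Fin (n-1-k) :=
      fun t => ⟨(π ⟨k + 2 + (t : ℕ), emb2 t⟩ : ℕ), hτb t⟩ with hg
    have hginj : Function.Injective g := by
      intro s t hst
      rw [Fin.mk.injEq] at hst
      have h2 := π.injective (Fin.ext hst)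
      rw [Fin.mk.injEq] at h2
      exact Fin.ext (by omega)
    set τ : Equiv.Perm (Fin (n-1-k)) :=
      Equiv.ofBijective g (Finite.injective_iff_bijective.mp hginj) with hτdef
    have hτval : ∀ (t : Fin (n-1-k)) (q : Fin (n+1)), (q : ℕ) = k + 2 + (t : ℕ) →
        (π q : ℕ) = (τ t : ℕ) := by
      intro t q hq
      have h1 : (τ t : ℕ) =
          (π (⟨k + 2 + (t : ℕ), emb2 t⟩ : Fin (n+1)) : ℕ) := rfl
      have h2 : q = (⟨k + 2 + (t : ℕ), emb2 t⟩ : Fin (n+1)) := Fin.ext hq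
      rw [h2, h1]
    have heq : π = permB k hk σ τ := by
      apply Equiv.ext
      intro i
      apply Fin.ext
      rw [permB_apply]
      rcases Nat.lt_or_ge (i : ℕ) k with hi | hi
      · rw [valL hk σ τ i hi]
        exact hσval ⟨(i : ℕ), hi⟩ i rfl
      rcases Nat.eq_or_lt_of_le hi with hi2 | hi2
      · rw [valK hk σ τ i hi2.symm]
        have h2 : i = km := Fin.ext (by omega)
        rw [h2]
        exact hmin
      rcases Nat.eq_or_lt_of_le hi2 with hi3 | hi3
      · rw [valK1 hk σ τ i (by omega)]
        have h2 : i = p := Fin.ext (by omega)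
        rw [h2, hπp, Fin.val_last]
      · rw [valR hk σ τ i (by omega)]
        exact hτval ⟨(i : ℕ) - (k + 2), by have := i.isLt; omega⟩ i (by simp; omega)
    refine Or.inr ⟨k, hk, σ, τ, ⟨?_, ?_⟩, ⟨?_, ?_⟩, heq⟩
    · rintro ⟨a, b, c, hab, hbc, hv1, hv2⟩
      rw [Fin.lt_def] at hab hbc hv1 hv2
      have ea := hσval a ⟨(a : ℕ), emb1 hk a⟩ rfl
      have eb := hσval b ⟨(b : ℕ), emb1 hk b⟩ rfl
      have ec := hσval c ⟨(c : ℕ), emb1 hk c⟩ rfl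
      exact h132 ⟨⟨(a : ℕ), emb1 hk a⟩, ⟨(b : ℕ), emb1 hk b⟩,
        ⟨(c : ℕ), emb1 hk c⟩,
        Fin.lt_def.mpr (by simp; omega), Fin.lt_def.mpr (by simp; omega),
        Fin.lt_def.mpr (by omega), Fin.lt_def.mpr (by omega)⟩
    · rintro ⟨a, b, hble, hab, hv1, hv2⟩
      rw [Fin.lt_def] at hab hv1 hv2
      have ea := hσval a ⟨(a : ℕ), emb1 hk a⟩ rfl
      have eb := hσval b ⟨(b : ℕ), emb1 hk b⟩ rfl
      have hP : ((⟨(b : ℕ), emb1 hk b⟩ : Fin (n+1)) : ℕ) + 1 < n + 1 := by simp; omega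
      have eb1 := hσval ⟨(b : ℕ) + 1, hble⟩
        ⟨((⟨(b : ℕ), emb1 hk b⟩ : Fin (n+1)) : ℕ) + 1, hP⟩ rfl
      exact h123 ⟨⟨(a : ℕ), emb1 hk a⟩, ⟨(b : ℕ), emb1 hk b⟩, hP,
        Fin.lt_def.mpr (by simp; omega), Fin.lt_def.mpr (by omega),
        Fin.lt_def.mpr (by omega)⟩
    · rintro ⟨a, b, c, hab, hbc, hv1, hv2⟩
      rw [Fin.lt_def] at hab hbc hv1 hv2
      have ea := hτval a ⟨k + 2 + (a : ℕ), emb2 a⟩ rfl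
      have eb := hτval b ⟨k + 2 + (b : ℕ), emb2 b⟩ rfl
      have ec := hτval c ⟨k + 2 + (c : ℕ), emb2 c⟩ rfl
      exact h132 ⟨⟨k + 2 + (a : ℕ), emb2 a⟩,
        ⟨k + 2 + (b : ℕ), emb2 b⟩,
        ⟨k + 2 + (c : ℕ), emb2 c⟩,
        Fin.lt_def.mpr (by simp; omega), Fin.lt_def.mpr (by simp; omega),
        Fin.lt_def.mpr (by omega), Fin.lt_def.mpr (by omega)⟩
    · rintro ⟨a, b, hble, hab, hv1, hv2⟩
      rw [Fin.lt_def] at hab hv1 hv2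
      have ea := hτval a ⟨k + 2 + (a : ℕ), emb2 a⟩ rfl
      have eb := hτval b ⟨k + 2 + (b : ℕ), emb2 b⟩ rfl
      have hP : ((⟨k + 2 + (b : ℕ), emb2 b⟩ : Fin (n+1)) : ℕ) + 1 < n + 1 := by simp; omega
      have eb1 := hτval ⟨(b : ℕ) + 1, hble⟩
        ⟨((⟨k + 2 + (b : ℕ), emb2 b⟩ : Fin (n+1)) : ℕ) + 1, hP⟩ rfl
      exact h123 ⟨⟨k + 2 + (a : ℕ), emb2 a⟩,
        ⟨k + 2 + (b : ℕ), emb2 b⟩, hP,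
        Fin.lt_def.mpr (by simp; omega), Fin.lt_def.mpr (by omega),
        Fin.lt_def.mpr (by omega)⟩

/-! ### Injectivity of the constructors -/

lemma permA_injective : Function.Injective (permA (n := n)) := by
  intro τ τ' h
  apply Equiv.ext; intro s; apply Fin.ext
  have h2 := congrArg Fin.val (Equiv.ext_iff.mp h ⟨(s : ℕ) + 1, emb3 s⟩)
  rw [permA_apply, permA_apply, valAS τ _ (by simp), valAS τ' _ (by simp)] at h2
  have key : ∀ x y : Fin n, x = s → y = s → (τ x : ℕ) = (τ' y : ℕ) →
      (τ s : ℕ) = (τ' s : ℕ) := by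
    rintro x y rfl rfl hxy; exact hxy
  exact key _ _ (Fin.ext (by simp)) (Fin.ext (by simp)) h2

lemma val_lt_n (i : Fin (n+1)) (h : (i : ℕ) ≠ k + 1) :
    (permBFun k hk σ τ i : ℕ) < n := by
  rcases Nat.lt_or_ge (i : ℕ) k with hi | hi
  · exact (valL_bounds hk σ τ i hi).2
  rcases Nat.eq_or_lt_of_le hi with hi2 | hi2
  · rw [valK hk σ τ i hi2.symm]; omega
  have h3 : k + 1 < (i : ℕ) := by omega
  have := valR_bounds hk σ τ i h3; omega

lemma permA_ne_permB (τ' : Equiv.Perm (Fin n)) : permA τ' ≠ permB k hk σ τ := by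
  intro h
  have h2 := congrArg Fin.val (Equiv.ext_iff.mp h ⟨0, by omega⟩)
  rw [permA_apply, permB_apply, valA0 τ' _ rfl] at h2
  have := val_lt_n hk σ τ ⟨0, by omega⟩ (by simp)
  omega

lemma permB_k_eq {k' : ℕ} (hk' : k' < n) (σ' : Equiv.Perm (Fin k'))
    (τ' : Equiv.Perm (Fin (n-1-k'))) (h : permB k hk σ τ = permB k' hk' σ' τ') :
    k = k' := by
  by_contra hne
  have h2 := congrArg Fin.val (Equiv.ext_iff.mp h ⟨k + 1, by omega⟩)
  rw [permB_apply, permB_apply, valK1 hk σ τ _ rfl] at h2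
  have := val_lt_n hk' σ' τ' ⟨k + 1, by omega⟩ (by simp; omega)
  omega

lemma permB_inj2 (σ' : Equiv.Perm (Fin k)) (τ' : Equiv.Perm (Fin (n-1-k)))
    (h : permB k hk σ τ = permB k hk σ' τ') : σ = σ' ∧ τ = τ' := by
  constructor
  · apply Equiv.ext; intro s; apply Fin.ext
    have h2 := congrArg Fin.val (Equiv.ext_iff.mp h ⟨(s : ℕ), emb1 hk s⟩)
    rw [permB_apply, permB_apply, valL hk σ τ _ s.isLt, valL hk σ' τ' _ s.isLt] at h2
    have key : ∀ x y : Fin k, x = s → y = s →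
        n - k + (σ x : ℕ) = n - k + (σ' y : ℕ) → (σ s : ℕ) = (σ' s : ℕ) := by
      rintro x y rfl rfl hxy; omega
    exact key _ _ (Fin.ext rfl) (Fin.ext rfl) h2
  · apply Equiv.ext; intro t; apply Fin.ext
    have h2 := congrArg Fin.val (Equiv.ext_iff.mp h ⟨k + 2 + (t : ℕ), emb2 t⟩)
    rw [permB_apply, permB_apply, valR hk σ τ _ (by simp; omega),
      valR hk σ' τ' _ (by simp; omega)] at h2
    have key : ∀ x y : Fin (n-1-k), x = t → y = t → (τ x : ℕ) = (τ' y : ℕ) →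
        (τ t : ℕ) = (τ' t : ℕ) := by
      rintro x y rfl rfl hxy; exact hxy
    exact key _ _ (Fin.ext (by simp)) (Fin.ext (by simp)) h2

/-! ### Counting -/

abbrev MP (n : ℕ) : Type := {π : Equiv.Perm (Fin n) // IsMotzkinPerm π}

noncomputable def Phi (n : ℕ) :
    (MP n ⊕ Σ k : Fin n, MP k.1 × MP (n - 1 - k.1)) → MP (n+1)
  | Sum.inl τ => ⟨permA τ.1, motzkin_permA τ.1 τ.2⟩
  | Sum.inr ⟨kk, στ⟩ => ⟨permB kk.1 kk.2 στ.1.1 στ.2.1,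
      motzkin_permB kk.2 στ.1.1 στ.2.1 στ.1.2 στ.2.2⟩

lemma Phi_bijective (n : ℕ) : Function.Bijective (Phi n) := by
  constructor
  · rintro (⟨τ, hτ⟩ | ⟨kk, ⟨σ, hσ⟩, ⟨τ, hτ⟩⟩) (⟨τ', hτ'⟩ | ⟨kk', ⟨σ', hσ'⟩, ⟨τ', hτ'⟩⟩) h <;>
      simp only [Phi, Subtype.mk.injEq] at h
    · exact congrArg _ (Subtype.ext (permA_injective h))
    · exact absurd h (permA_ne_permB kk'.2 σ' τ' τ)
    · exact absurd h.symm (permA_ne_permB kk.2 σ τ τ')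
    · have hkeq : kk = kk' := Fin.ext (permB_k_eq kk.2 σ τ kk'.2 σ' τ' h)
      subst hkeq
      obtain ⟨h1, h2⟩ := permB_inj2 kk.2 σ τ σ' τ' h
      subst h1; subst h2
      rfl
  · rintro ⟨π, hπ⟩
    rcases decompose π hπ with ⟨τ, hτ, heq⟩ | ⟨k, hk, σ, τ, hσ, hτ, heq⟩
    · exact ⟨Sum.inl ⟨τ, hτ⟩, Subtype.ext heq.symm⟩
    · exact ⟨Sum.inr ⟨⟨k, hk⟩, ⟨σ, hσ⟩, ⟨τ, hτ⟩⟩, Subtype.ext heq.symm⟩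

lemma card_rec (n : ℕ) : Nat.card (MP (n+1)) =
    Nat.card (MP n) + ∑ j ∈ Finset.range n, Nat.card (MP j) * Nat.card (MP (n-1-j)) := by
  classical
  rw [← Nat.card_congr (Equiv.ofBijective _ (Phi_bijective n))]
  rw [Nat.card_sum]
  congr 1
  haveI : ∀ j : ℕ, Fintype (MP j) := fun j => Fintype.ofFinite _
  rw [Nat.card_eq_fintype_card, Fintype.card_sigma]
  rw [← Fin.sum_univ_eq_sum_range (fun j => Nat.card (MP j) * Nat.card (MP (n-1-j))) n]
  refine Finset.sum_congr rfl fun x _ => ?_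
  rw [Fintype.card_prod, Nat.card_eq_fintype_card, Nat.card_eq_fintype_card]

lemma card_zero : Nat.card (MP 0) = 1 := by
  have h1 : ∀ π : Equiv.Perm (Fin 0), IsMotzkinPerm π := fun π =>
    ⟨fun h => by obtain ⟨i, -⟩ := h; exact i.elim0,
     fun h => by obtain ⟨i, -⟩ := h; exact i.elim0⟩
  rw [Nat.card_eq_one_iff_unique]
  exact ⟨⟨fun a b => Subtype.ext (Equiv.ext fun i => i.elim0)⟩, ⟨⟨1, h1 1⟩⟩⟩

end MZ

/-- The number of Motzkin permutations of length `n` is the `n`-th Motzkin number. -/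
theorem card_motzkin_perms (n : ℕ) :
    Nat.card {π : Equiv.Perm (Fin n) // IsMotzkinPerm π} = motzkin n := by
  induction n using Nat.strong_induction_on with
  | _ n ih =>
    match n with
    | 0 =>
      show Nat.card (MZ.MP 0) = motzkin 0
      rw [MZ.card_zero, motzkin]
    | Nat.succ m =>
      show Nat.card (MZ.MP (m+1)) = motzkin (m+1)
      rw [MZ.card_rec m, motzkin]
      have hm : Nat.card (MZ.MP m) = motzkin m := ih m (by omega)
      rw [hm]
      congr 1
      rw [Finset.sum_attach (Finset.range m) (fun j => motzkin j * motzkin (m - 1 - j))]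
      refine Finset.sum_congr rfl fun j hj => ?_
      rw [Finset.mem_range] at hj
      rw [ih j (by omega), ih (m - 1 - j) (by omega)]
end

section
/- For every n ≥ 0, the number of Motzkin permutations of length n equals the number of Dyck paths of length 2n that contain no three consecutive up-steps. -/
/-- The value of a Dyck-path step: `true` is an up-step `(1,1)`, `false` a down-step `(1,-1)`. -/
def dval : Bool → ℤ
  | true => 1
  | false => -1

/-- A Dyck path: a word in up/down steps ending at height 0 and never going below 0. -/
def IsDyckPath (D : List Bool) : Prop :=
  (D.map dval).sum = 0 ∧ ∀ p : List Bool, p <+: D → 0 ≤ (p.map dval).sum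

namespace MotzkinAux
open List

def sumd (l : List Bool) : ℤ := (l.map dval).sum

@[simp] lemma sumd_nil : sumd [] = 0 := rfl
@[simp] lemma sumd_cons (b : Bool) (l : List Bool) : sumd (b :: l) = dval b + sumd l := by
  simp [sumd]
@[simp] lemma sumd_append (l₁ l₂ : List Bool) : sumd (l₁ ++ l₂) = sumd l₁ + sumd l₂ := by
  simp [sumd]

@[simp] lemma sumd_def (l : List Bool) : (l.map dval).sum = sumd l := rfl

lemma isDyck_iff (D : List Bool) : IsDyckPath D ↔ (sumd D = 0 ∧ ∀ p, p <+: D → 0 ≤ sumd p) :=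
  Iff.rfl

def NoUUU (l : List Bool) : Prop := ¬ [true, true, true] <:+: l

/-- first passage decomposition -/
lemma first_passage : ∀ (E : List Bool) (c : ℤ), 0 ≤ c → sumd E < -c →
    (∀ r, r <+: E → -c - 1 ≤ sumd r) →
    ∃ p q, E = p ++ false :: q ∧ sumd p = -c ∧ ∀ r, r <+: p → -c ≤ sumd r := by
  intro E
  induction E with
  | nil => intro c hc h _; simp at h; omega
  | cons e E ih =>
    intro c hc hlt hpre
    cases e with
    | true =>
      obtain ⟨p, q, hE, hs, hp⟩ := ih (c+1) (by omega)
        (by have := hlt; simp [dval] at this ⊢; omega)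
        (by intro r hr
            have := hpre (true :: r) (by simpa using hr)
            simp [dval] at this ⊢; omega)
      refine ⟨true :: p, q, by simp [hE], by simp [dval]; omega, ?_⟩
      intro r hr
      cases r with
      | nil => simpa using hc
      | cons b r =>
        rw [cons_prefix_cons] at hr
        obtain ⟨rfl, hr⟩ := hr
        have := hp r hr
        simp [dval]; omega
    | false =>
      rcases eq_or_lt_of_le hc with hc0 | hc0
      · refine ⟨[], E, rfl, by simp [← hc0], ?_⟩
        intro r hr
        rw [prefix_nil.1 hr]
        simp [← hc0]
      · obtain ⟨p, q, hE, hs, hp⟩ := ih (c-1) (by omega)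
          (by have := hlt; simp [dval] at this ⊢; omega)
          (by intro r hr
              have := hpre (false :: r) (by simpa using hr)
              simp [dval] at this ⊢; omega)
        refine ⟨false :: p, q, by simp [hE], by simp [dval]; omega, ?_⟩
        intro r hr
        cases r with
        | nil => simp; omega
        | cons b r =>
          rw [cons_prefix_cons] at hr
          obtain ⟨rfl, hr⟩ := hr
          have := hp r hr
          simp [dval]; omega

lemma prefix_append_cases {α : Type*} {r a b : List α} (h : r <+: a ++ b) :
    r <+: a ∨ ∃ s, r = a ++ s ∧ s <+: b := by
  obtain ⟨t, ht⟩ := h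
  rcases (append_eq_append_iff.1 ht) with ⟨a', ha, hb⟩ | ⟨c', ha, hb⟩
  · left; exact ⟨a', ha.symm⟩
  · right; exact ⟨c', ha, ⟨t, hb.symm⟩⟩

lemma isDyck_glue {p q : List Bool} (hp : IsDyckPath p) (hq : IsDyckPath q) :
    IsDyckPath (true :: p ++ false :: q) := by
  rw [isDyck_iff] at *
  obtain ⟨hp0, hppre⟩ := hp
  obtain ⟨hq0, hqpre⟩ := hq
  constructor
  · simp [dval]; omega
  · intro r hr
    rcases prefix_append_cases hr with h | ⟨s, rfl, hs⟩
    · cases r with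
      | nil => simp
      | cons b r =>
        rw [cons_prefix_cons] at h
        obtain ⟨rfl, h⟩ := h
        have := hppre r h
        simp [dval]; omega
    · cases s with
      | nil => simp [dval]; omega
      | cons b s =>
        rw [cons_prefix_cons] at hs
        obtain ⟨rfl, hs⟩ := hs
        have := hqpre s hs
        simp [dval]; omega

/-- decompose a nonempty Dyck path at its first return -/
lemma dyck_decomp {D : List Bool} (hD : IsDyckPath D) (hne : D ≠ []) :
    ∃ p q, D = true :: p ++ false :: q ∧ IsDyckPath p ∧ IsDyckPath q := by
  rw [isDyck_iff] at hD
  obtain ⟨h0, hpre⟩ := hD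
  cases D with
  | nil => exact absurd rfl hne
  | cons d E =>
    have hd : d = true := by
      have := hpre [d] ⟨E, rfl⟩
      cases d with
      | true => rfl
      | false => simp [dval] at this
    subst hd
    have hsE : sumd E = -1 := by
      have h0' := h0
      simp [dval] at h0' ⊢; omega
    obtain ⟨p, q, hE, hs, hp⟩ := first_passage E 0 le_rfl (by omega)
      (by intro r hr
          have := hpre (true :: r) (by simpa using hr)
          simp [dval] at this ⊢; omega)
    subst hE
    refine ⟨p, q, rfl, ⟨by simpa using hs, by simpa using hp⟩, ?_, ?_⟩
    · show sumd q = 0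
      simp [dval] at hsE; omega
    · intro r hr
      show 0 ≤ sumd r
      have hpr : (true :: p) ++ (false :: r) <+: (true :: p) ++ (false :: q) :=
        (prefix_append_right_inj _).2 (cons_prefix_cons.2 ⟨rfl, hr⟩)
      have := hpre ((true :: p) ++ (false :: r)) (by simpa using hpr)
      simp [dval] at this ⊢
      omega

lemma TTT_infix_cons (a : Bool) (l : List Bool) :
    [true,true,true] <:+: (a :: l) ↔ (a = true ∧ [true,true] <+: l) ∨ [true,true,true] <:+: l := by
  rw [infix_cons_iff, cons_prefix_cons]
  simp [eq_comm]

lemma TT_prefix_append_false (p q : List Bool) :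
    [true,true] <+: p ++ false :: q ↔ [true,true] <+: p := by
  match p with
  | [] => simp [cons_prefix_cons]
  | [x] => simp [cons_prefix_cons]
  | x :: y :: p' => simp [cons_prefix_cons]

@[simp] lemma NoUUU_nil : NoUUU [] := by simp [NoUUU]

lemma NoUUU_append_false (p q : List Bool) :
    NoUUU (p ++ false :: q) ↔ NoUUU p ∧ NoUUU q := by
  induction p with
  | nil => simp [NoUUU, TTT_infix_cons]
  | cons a p ih =>
    unfold NoUUU at *
    rw [cons_append, TTT_infix_cons, TT_prefix_append_false, TTT_infix_cons]
    tauto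

lemma NoUUU_cons_true (p : List Bool) :
    NoUUU (true :: p) ↔ NoUUU p ∧ ¬ [true,true] <+: p := by
  unfold NoUUU
  rw [TTT_infix_cons]
  tauto

lemma NoUUU_glue (p q : List Bool) :
    NoUUU ((true :: p) ++ false :: q) ↔ (NoUUU p ∧ ¬ [true,true] <+: p) ∧ NoUUU q := by
  rw [cons_append, NoUUU_cons_true, NoUUU_append_false, TT_prefix_append_false]
  tauto

lemma sumd_parity (l : List Bool) : (2 : ℤ) ∣ (sumd l + l.length) := by
  induction l with
  | nil => simp
  | cons b l ih =>
    cases b <;> · simp [dval] at ih ⊢; omega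

lemma dyck_nil : IsDyckPath [] := by
  constructor
  · simp
  · intro p hp; rw [prefix_nil.1 hp]; simp

lemma dyck_unique_split {p p' q q' : List Bool} (hp : IsDyckPath p) (hp' : IsDyckPath p')
    (h : p ++ false :: q = p' ++ false :: q') : p = p' ∧ q = q' := by
  rcases append_eq_append_iff.1 h with ⟨a', ha, hb⟩ | ⟨c', ha, hb⟩
  · cases a' with
    | nil => simp at ha hb; exact ⟨ha.symm, hb⟩
    | cons x a'' =>
      exfalso
      rw [cons_append] at hb
      obtain ⟨rfl, rfl⟩ : x = false ∧ q = a'' ++ false :: q' := by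
        simpa using hb
      have := hp'.2 ((p ++ [false]).map id) (by
        simp only [map_id]
        exact ⟨a'' , by simp [ha]⟩)
      simp only [map_id] at this
      have hps : sumd p = 0 := hp.1
      simp [dval] at this
      omega
  · cases c' with
    | nil => simp at ha hb; exact ⟨ha, hb.symm⟩
    | cons x c'' =>
      exfalso
      rw [cons_append] at hb
      obtain ⟨rfl, rfl⟩ : x = false ∧ q' = c'' ++ false :: q := by
        simpa using hb
      have := hp.2 (p' ++ [false]) ⟨c'', by simp [ha]⟩
      have hps : sumd p' = 0 := hp'.1
      simp [dval] at this
      omega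

def DA (n : ℕ) := {D : List Bool // IsDyckPath D ∧ D.length = 2*n ∧ NoUUU D}
def DB (n : ℕ) := {D : List Bool // (IsDyckPath D ∧ D.length = 2*n ∧ NoUUU D) ∧ ¬ [true,true] <+: D}

instance DA.finite (n : ℕ) : Finite (DA n) := by
  have h : {D : List Bool | IsDyckPath D ∧ D.length = 2*n ∧ NoUUU D}.Finite :=
    (List.finite_length_eq Bool (2*n)).subset (fun D hD => hD.2.1)
  exact h.to_subtype

instance DB.finite (n : ℕ) : Finite (DB n) := by
  have h : {D : List Bool | (IsDyckPath D ∧ D.length = 2*n ∧ NoUUU D) ∧ ¬ [true,true] <+: D}.Finite :=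
    (List.finite_length_eq Bool (2*n)).subset (fun D hD => hD.1.2.1)
  exact h.to_subtype

lemma card_DA_zero : Nat.card (DA 0) = 1 := by
  have : Unique (DA 0) := by
    refine ⟨⟨⟨[], dyck_nil, by simp, NoUUU_nil⟩⟩, ?_⟩
    rintro ⟨D, hD, hlen, hno⟩
    have : D = [] := by
      cases D with
      | nil => rfl
      | cons a D => simp at hlen
    subst this; rfl
  exact Nat.card_unique

lemma card_DB_zero : Nat.card (DB 0) = 1 := by
  have : Unique (DB 0) := by
    refine ⟨⟨⟨[], ⟨dyck_nil, by simp, NoUUU_nil⟩, by simp⟩⟩, ?_⟩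
    rintro ⟨D, ⟨hD, hlen, hno⟩, h2⟩
    have : D = [] := by
      cases D with
      | nil => rfl
      | cons a D => simp at hlen
    subst this; rfl
  exact Nat.card_unique

lemma dyck_head {d : Bool} {E : List Bool} (h : IsDyckPath (d :: E)) : d = true := by
  have := h.2 [d] ⟨E, rfl⟩
  cases d with
  | true => rfl
  | false => simp [dval] at this

lemma card_DB_succ (k : ℕ) : Nat.card (DB (k+1)) = Nat.card (DA k) := by
  symm
  have hprop : ∀ q : List Bool, (IsDyckPath q ∧ q.length = 2*k ∧ NoUUU q) →
      ((IsDyckPath (true :: false :: q) ∧ (true :: false :: q).length = 2*(k+1) ∧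
        NoUUU (true :: false :: q)) ∧ ¬ [true,true] <+: (true :: false :: q)) := by
    rintro q ⟨h1, h2, h3⟩
    have hglue := NoUUU_glue [] q
    refine ⟨⟨by simpa using isDyck_glue dyck_nil h1, by simp [h2]; omega, ?_⟩, ?_⟩
    · rw [show (true :: false :: q) = (true :: ([] : List Bool)) ++ false :: q from rfl]
      rw [hglue]
      exact ⟨⟨NoUUU_nil, by simp⟩, h3⟩
    · rw [cons_prefix_cons]
      rintro ⟨-, h⟩
      rw [cons_prefix_cons] at h
      simp at h
  apply Nat.card_eq_of_bijective (fun q : DA k => (⟨true :: false :: q.1, hprop q.1 q.2⟩ : DB (k+1)))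
  constructor
  · rintro ⟨q, hq⟩ ⟨q', hq'⟩ h
    simp only [Subtype.mk.injEq, List.cons.injEq, true_and] at h
    exact Subtype.ext h
  · rintro ⟨D, ⟨hD, hlen, hno⟩, hTT⟩
    have hne : D ≠ [] := by intro h; subst h; simp at hlen
    obtain ⟨p, q, hDeq, hp, hq⟩ := dyck_decomp hD hne
    have hpnil : p = [] := by
      cases p with
      | nil => rfl
      | cons b p' =>
        exfalso
        have hb : b = true := dyck_head hp
        subst hb hDeq
        exact hTT ⟨p' ++ false :: q, by simp⟩
    subst hpnil
    subst hDeq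
    have hD' : true :: ([] : List Bool) ++ false :: q = true :: false :: q := rfl
    rw [hD'] at hlen hno
    have hq2 : q.length = 2 * k := by simp at hlen; omega
    have hq3 : NoUUU q := by
      rw [show (true :: false :: q) = (true :: ([] : List Bool)) ++ false :: q from rfl,
        NoUUU_glue] at hno
      exact hno.2
    exact ⟨⟨q, hq, hq2, hq3⟩, Subtype.ext rfl⟩

lemma card_DA_succ (n : ℕ) :
    Nat.card (DA (n+1)) = ∑ k : Fin (n+1), Nat.card (DB k) * Nat.card (DA (n - k)) := by
  have key : Nat.card (DA (n+1)) = Nat.card (Σ k : Fin (n+1), DB (k : ℕ) × DA (n - (k : ℕ))) := by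
    symm
    have hprop : ∀ (k : Fin (n+1)) (p q : List Bool),
        ((IsDyckPath p ∧ p.length = 2*(k:ℕ) ∧ NoUUU p) ∧ ¬ [true,true] <+: p) →
        (IsDyckPath q ∧ q.length = 2*(n - (k:ℕ)) ∧ NoUUU q) →
        (IsDyckPath ((true :: p) ++ false :: q) ∧
          ((true :: p) ++ false :: q).length = 2*(n+1) ∧ NoUUU ((true :: p) ++ false :: q)) := by
      rintro k p q ⟨⟨hp1, hp2, hp3⟩, hp4⟩ ⟨hq1, hq2, hq3⟩
      have hk : (k : ℕ) ≤ n := Nat.lt_succ_iff.1 k.isLt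
      refine ⟨by simpa using isDyck_glue hp1 hq1, by simp [hp2, hq2]; omega, ?_⟩
      rw [NoUUU_glue]
      exact ⟨⟨hp3, hp4⟩, hq3⟩
    apply Nat.card_eq_of_bijective (fun x : Σ k : Fin (n+1), DB (k : ℕ) × DA (n - (k : ℕ)) =>
      (⟨(true :: x.2.1.1) ++ false :: x.2.2.1, hprop x.1 x.2.1.1 x.2.2.1 x.2.1.2 x.2.2.2⟩ : DA (n+1)))
    constructor
    · rintro ⟨k, ⟨p, hp⟩, ⟨q, hq⟩⟩ ⟨k', ⟨p', hp'⟩, ⟨q', hq'⟩⟩ h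
      simp only [Subtype.mk.injEq, cons_append, List.cons.injEq, true_and] at h
      obtain ⟨rfl, rfl⟩ := dyck_unique_split hp.1.1 hp'.1.1 h
      have : k = k' := by
        have h1 := hp.1.2.1
        have h2 := hp'.1.2.1
        apply Fin.ext; omega
      subst this
      rfl
    · rintro ⟨D, hD, hlen, hno⟩
      have hne : D ≠ [] := by intro h; subst h; simp at hlen
      obtain ⟨p, q, hDeq, hp, hq⟩ := dyck_decomp hD hne
      subst hDeq
      have hpar : (2:ℤ) ∣ (sumd p + p.length) := sumd_parity p
      have hsp : sumd p = 0 := hp.1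
      have hpe : ∃ j, p.length = 2 * j := by
        rcases hpar with ⟨c, hc⟩
        rw [hsp] at hc
        have hc0 : 0 ≤ c := by omega
        exact ⟨c.toNat, by omega⟩
      obtain ⟨j, hj⟩ := hpe
      have hlen' : p.length + q.length + 2 = 2*(n+1) := by
        simp at hlen; omega
      have hjn : j ≤ n := by omega
      rw [NoUUU_glue] at hno
      refine ⟨⟨⟨j, by omega⟩, ⟨p, ⟨hp, hj, hno.1.1⟩, hno.1.2⟩, ⟨q, hq, by simp only [Fin.val_mk]; omega, hno.2⟩⟩, rfl⟩
  rw [key]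
  letI : ∀ k : Fin (n+1), Fintype (DB (k:ℕ) × DA (n - (k:ℕ))) := fun k => Fintype.ofFinite _
  rw [Nat.card_eq_fintype_card, Fintype.card_sigma]
  refine Finset.sum_congr rfl fun k _ => ?_
  rw [← Nat.card_eq_fintype_card, Nat.card_prod]



def Pat132 (l : List ℕ) : Prop := ∃ x y z : ℕ, [x, y, z] <+ l ∧ x < z ∧ z < y

def Pat1_23 (l : List ℕ) : Prop :=
  ∃ (x u v : ℕ) (p q : List ℕ), l = p ++ u :: v :: q ∧ x ∈ p ∧ x < u ∧ u < v

def AvL (l : List ℕ) : Prop := ¬ Pat132 l ∧ ¬ Pat1_23 l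

def PBcond (l : List ℕ) : Prop := ∀ x ∈ l, ∀ y ∈ l.getLast?, y ≤ x

/-! ### monotonicity / lifting lemmas -/

lemma pat132_of_sublist {l₁ l₂ : List ℕ} (h : l₁ <+ l₂) (hp : Pat132 l₁) : Pat132 l₂ := by
  obtain ⟨x, y, z, hs, h1, h2⟩ := hp
  exact ⟨x, y, z, hs.trans h, h1, h2⟩

lemma pat1_23_append_right {s r : List ℕ} (hp : Pat1_23 s) : Pat1_23 (s ++ r) := by
  obtain ⟨x, u, v, p, q, rfl, hx, h1, h2⟩ := hp
  exact ⟨x, u, v, p, q ++ r, by simp, hx, h1, h2⟩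

lemma pat1_23_append_left {s r : List ℕ} (hp : Pat1_23 r) : Pat1_23 (s ++ r) := by
  obtain ⟨x, u, v, p, q, rfl, hx, h1, h2⟩ := hp
  exact ⟨x, u, v, s ++ p, q, by simp, by simp [hx], h1, h2⟩

/-! ### shift invariance -/

lemma pat132_shift (m : ℕ) (l : List ℕ) : Pat132 (l.map (· + m)) ↔ Pat132 l := by
  constructor
  · rintro ⟨x, y, z, hs, h1, h2⟩
    rw [sublist_map_iff] at hs
    obtain ⟨l', hl', heq⟩ := hs
    match l', heq with
    | [a, b, c], heq =>
      simp only [map_cons, map_nil, List.cons.injEq, and_true] at heq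
      obtain ⟨rfl, rfl, rfl⟩ := heq
      exact ⟨a, b, c, hl', by omega, by omega⟩
  · rintro ⟨x, y, z, hs, h1, h2⟩
    exact ⟨x + m, y + m, z + m, by simpa using hs.map (· + m), by omega, by omega⟩

lemma pat1_23_shift (m : ℕ) (l : List ℕ) : Pat1_23 (l.map (· + m)) ↔ Pat1_23 l := by
  constructor
  · rintro ⟨x, u, v, p, q, heq, hx, h1, h2⟩
    rw [map_eq_append_iff] at heq
    obtain ⟨p', r', rfl, rfl, hr⟩ := heq
    rw [map_eq_cons_iff] at hr
    obtain ⟨u', r'', rfl, rfl, hr⟩ := hr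
    rw [map_eq_cons_iff] at hr
    obtain ⟨v', q', rfl, rfl, rfl⟩ := hr
    simp only [mem_map] at hx
    obtain ⟨x', hx', rfl⟩ := hx
    exact ⟨x', u', v', p', q', rfl, hx', by omega, by omega⟩
  · rintro ⟨x, u, v, p, q, rfl, hx, h1, h2⟩
    exact ⟨x + m, u + m, v + m, p.map (· + m), q.map (· + m), by simp,
      mem_map_of_mem hx, by omega, by omega⟩

lemma avl_shift (m : ℕ) (l : List ℕ) : AvL (l.map (· + m)) ↔ AvL l := by
  unfold AvL
  rw [pat132_shift, pat1_23_shift]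

/-! ### appending a trailing zero -/

lemma pat132_concat_zero (w : List ℕ) : Pat132 (w ++ [0]) ↔ Pat132 w := by
  constructor
  · rintro ⟨x, y, z, hs, h1, h2⟩
    rcases sublist_append_iff.1 hs with ⟨l₁, l₂, heq, hs1, hs2⟩
    have hl₂ : l₂ = [] ∨ l₂ = [0] := by
      cases hs2 with
      | cons _ h => left; exact sublist_nil.1 h
      | cons_cons _ h => right; rw [sublist_nil.1 h]
    rcases hl₂ with rfl | rfl
    · rw [append_nil] at heq
      exact ⟨x, y, z, heq ▸ hs1, h1, h2⟩
    · have hlen : l₁.length = 2 := by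
        have := congrArg List.length heq; simp at this; omega
      match l₁, hlen with
      | [x', y'], _ =>
        obtain ⟨rfl, rfl, rfl⟩ : x = x' ∧ y = y' ∧ z = 0 := by simpa using heq
        omega
  · intro h
    exact pat132_of_sublist (sublist_append_left w [0]) h

lemma pat1_23_concat_zero (w : List ℕ) : Pat1_23 (w ++ [0]) ↔ Pat1_23 w := by
  constructor
  · rintro ⟨x, u, v, p, q, heq, hx, h1, h2⟩
    rcases append_eq_append_iff.1 heq with ⟨a', ha, hb⟩ | ⟨c', ha, hb⟩
    · -- p = w ++ a', [0] = a' ++ u :: v :: q  : impossible by length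
      exfalso
      have := congrArg List.length hb
      simp at this
      omega
    · -- w = p ++ c', u :: v :: q = c' ++ [0]
      cases c' with
      | nil =>
        exfalso
        have := congrArg List.length hb
        simp at this
      | cons u' c'' =>
        cases c'' with
        | nil =>
          exfalso
          obtain ⟨rfl, hv, -⟩ : u = u' ∧ v = 0 ∧ q = [] := by
            simpa using hb
          omega
        | cons v' c''' =>
          obtain ⟨rfl, rfl, hq⟩ : u = u' ∧ v = v' ∧ q = c''' ++ [0] := by
            simpa using hb
          exact ⟨x, u, v, p, c''', ha, hx, h1, h2⟩
  · intro h
    exact pat1_23_append_right h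

lemma avl_concat_zero (w : List ℕ) : AvL (w ++ [0]) ↔ AvL w := by
  unfold AvL
  rw [pat132_concat_zero, pat1_23_concat_zero]

/-! ### gluing around a maximal element -/

lemma glue_pat132 {s t : List ℕ} {M : ℕ}
    (hs : ¬ Pat132 s) (ht : ¬ Pat132 t)
    (hcross : ∀ x ∈ s, ∀ z ∈ t, z < x)
    (hsM : ∀ x ∈ s, x < M) (htM : ∀ z ∈ t, z < M) :
    ¬ Pat132 (s ++ M :: t) := by
  rintro ⟨x, y, z, hsub, h1, h2⟩
  rcases sublist_append_iff.1 hsub with ⟨l₁, l₂, heq, hs1, hs2⟩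
  rcases l₁ with - | ⟨a, l₁⟩
  · obtain rfl : [x, y, z] = l₂ := heq
    rcases sublist_cons_iff.1 hs2 with h | ⟨r, hr, hrs⟩
    · exact ht ⟨x, y, z, h, h1, h2⟩
    · obtain ⟨hxM, hr2⟩ : x = M ∧ [y, z] = r := by simpa using hr
      have hz : z ∈ t := hrs.subset (by rw [← hr2]; simp)
      have := htM z hz
      omega
  rcases l₁ with - | ⟨b, l₁⟩
  · obtain ⟨hxa, hl₂⟩ : x = a ∧ [y, z] = l₂ := by simpa using heq
    have hxs : a ∈ s := hs1.subset (by simp)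
    rw [← hl₂] at hs2
    rcases sublist_cons_iff.1 hs2 with h | ⟨r, hr, hrs⟩
    · have hz : z ∈ t := h.subset (by simp)
      have := hcross a hxs z hz
      omega
    · obtain ⟨hyM, hr2⟩ : y = M ∧ [z] = r := by simpa using hr
      have hz : z ∈ t := hrs.subset (by rw [← hr2]; simp)
      have := hcross a hxs z hz
      omega
  rcases l₁ with - | ⟨c, l₁⟩
  · obtain ⟨hxa, hyb, hl₂⟩ : x = a ∧ y = b ∧ [z] = l₂ := by simpa using heq
    have hxs : a ∈ s := hs1.subset (by simp)
    have hys : b ∈ s := hs1.subset (by simp)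
    rw [← hl₂] at hs2
    rcases sublist_cons_iff.1 hs2 with h | ⟨r, hr, hrs⟩
    · have hz : z ∈ t := h.subset (by simp)
      have := hcross a hxs z hz
      omega
    · obtain ⟨hzM, -⟩ : z = M ∧ [] = r := by simpa using hr
      have := hsM b hys
      omega
  · obtain ⟨hxa, hyb, hzc, hl₁, hl₂⟩ : x = a ∧ y = b ∧ z = c ∧ l₁ = [] ∧ [] = l₂ := by
      have hlen := congrArg List.length heq
      simp at hlen
      obtain rfl : l₁ = [] := by simpa using hlen.1
      simpa using heq
    subst hxa hyb hzc hl₁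
    exact hs ⟨x, y, z, hs1, h1, h2⟩

lemma glue_pat1_23 {s t : List ℕ} {M : ℕ}
    (hs : ¬ Pat1_23 s) (ht : ¬ Pat1_23 t)
    (hcross : ∀ x ∈ s, ∀ z ∈ t, z < x)
    (htM : ∀ z ∈ t, z < M)
    (hPB : PBcond s) :
    ¬ Pat1_23 (s ++ M :: t) := by
  rintro ⟨x, u, v, p, q, heq, hx, h1, h2⟩
  rcases append_eq_append_iff.1 heq with ⟨a', ha, hb⟩ | ⟨c', ha, hb⟩
  · -- p = s ++ a', M :: t = a' ++ u :: v :: q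
    cases a' with
    | nil =>
      obtain ⟨hMu, ht'⟩ : M = u ∧ t = v :: q := by simpa using hb
      have := htM v (by rw [ht']; simp)
      omega
    | cons w a'' =>
      obtain ⟨hMw, ht'⟩ : M = w ∧ t = a'' ++ u :: v :: q := by simpa using hb
      have hut : u ∈ t := by rw [ht']; simp
      rw [ha] at hx
      simp only [mem_append, mem_cons] at hx
      rcases hx with hx | hx | hx
      · have := hcross x hx u hut; omega
      · subst hx
        have := htM u hut
        omega
      · exact ht ⟨x, u, v, a'', q, ht', hx, h1, h2⟩
  · -- s = p ++ c', u :: v :: q = c' ++ M :: t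
    cases c' with
    | nil =>
      obtain ⟨huM, ht'⟩ : u = M ∧ v :: q = t := by simpa using hb
      have := htM v (by rw [← ht']; simp)
      omega
    | cons w c'' =>
      cases c'' with
      | nil =>
        obtain ⟨huw, hv⟩ : u = w ∧ v :: q = M :: t := by simpa using hb
        have hlast : s.getLast? = some w := by rw [ha, getLast?_concat]
        have hxs : x ∈ s := by rw [ha]; exact mem_append_left _ hx
        have := hPB x hxs w (by rw [hlast]; rfl)
        omega
      | cons w' c₃ =>
        obtain ⟨huw, hvw, hq⟩ : u = w ∧ v = w' ∧ q = c₃ ++ M :: t := by simpa using hb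
        subst huw hvw
        exact hs ⟨x, u, v, p, c₃, by rw [ha], hx, h1, h2⟩

/-! ### the subtype families and counting -/

def PA (n : ℕ) := {l : List ℕ // l ~ List.range n ∧ AvL l}
def PB (n : ℕ) := {l : List ℕ // (l ~ List.range n ∧ AvL l) ∧ PBcond l}

instance PA.finite (n : ℕ) : Finite (PA n) := by
  have h : {l : List ℕ | l ~ List.range n ∧ AvL l}.Finite :=
    (List.range n).permutations.toFinset.finite_toSet.subset
      (fun l hl => by simpa [List.mem_permutations] using hl.1)
  exact h.to_subtype

instance PB.finite (n : ℕ) : Finite (PB n) := by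
  have h : {l : List ℕ | (l ~ List.range n ∧ AvL l) ∧ PBcond l}.Finite :=
    (List.range n).permutations.toFinset.finite_toSet.subset
      (fun l hl => by simpa [List.mem_permutations] using hl.1.1)
  exact h.to_subtype

lemma avl_nil : AvL [] := by
  constructor
  · rintro ⟨x, y, z, hs, -, -⟩
    simpa using hs.length_le
  · rintro ⟨x, u, v, p, q, heq, -, -, -⟩
    have := congrArg List.length heq
    simp at this

lemma card_PA_zero : Nat.card (PA 0) = 1 := by
  have : Unique (PA 0) := by
    refine ⟨⟨⟨[], by simp, avl_nil⟩⟩, ?_⟩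
    rintro ⟨l, hl, -⟩
    have : l = [] := by simpa using hl.length_eq
    subst this; rfl
  exact Nat.card_unique

lemma card_PB_zero : Nat.card (PB 0) = 1 := by
  have : Unique (PB 0) := by
    refine ⟨⟨⟨[], ⟨by simp, avl_nil⟩, by intro x hx; simp at hx⟩⟩, ?_⟩
    rintro ⟨l, ⟨hl, -⟩, -⟩
    have : l = [] := by simpa using hl.length_eq
    subst this; rfl
  exact Nat.card_unique

lemma card_PB_succ (k : ℕ) : Nat.card (PB (k+1)) = Nat.card (PA k) := by
  symm
  have hprop : ∀ u : List ℕ, (u ~ List.range k ∧ AvL u) →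
      ((u.map (· + 1) ++ [0] ~ List.range (k+1) ∧ AvL (u.map (· + 1) ++ [0])) ∧
        PBcond (u.map (· + 1) ++ [0])) := by
    rintro u ⟨hperm, havl⟩
    have hmem : ∀ a, a ∈ u ↔ a < k := fun a => by
      rw [hperm.mem_iff, mem_range]
    have hnd : u.Nodup := hperm.nodup_iff.2 (nodup_range)
    refine ⟨⟨?_, ?_⟩, ?_⟩
    · rw [perm_ext_iff_of_nodup ?_ (nodup_range)]
      · intro a
        simp only [mem_append, mem_map, mem_cons, mem_range, not_mem_nil]
        constructor
        · rintro (⟨b, hb, rfl⟩ | h)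
          · have := (hmem b).1 hb; omega
          · simp at h; omega
        · intro ha
          rcases Nat.eq_zero_or_pos a with rfl | hpos
          · right; simp
          · left; exact ⟨a - 1, (hmem _).2 (by omega), by omega⟩
      · rw [nodup_append']
        refine ⟨hnd.map (fun a b h => by omega), by simp, ?_⟩
        intro a ha hb
        simp only [mem_map] at ha
        simp at hb
        obtain ⟨b, -, rfl⟩ := ha
        omega
    · rw [avl_concat_zero, avl_shift]
      exact havl
    · intro x hx y hy
      rw [getLast?_concat] at hy
      simp at hy
      omega
  apply Nat.card_eq_of_bijective
    (fun u : PA k => (⟨u.1.map (· + 1) ++ [0], hprop u.1 u.2⟩ : PB (k+1)))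
  constructor
  · rintro ⟨u, hu⟩ ⟨u', hu'⟩ h
    simp only [Subtype.mk.injEq] at h
    have h2 := append_cancel_right h
    exact Subtype.ext (map_injective_iff.2 (fun a b hab => by omega) h2)
  · rintro ⟨l, ⟨hperm, havl⟩, hPB⟩
    have hlen : l.length = k + 1 := by simpa using hperm.length_eq
    have hne : l ≠ [] := by intro h; rw [h] at hlen; simp at hlen
    have hnd : l.Nodup := hperm.nodup_iff.2 (nodup_range)
    have hmem : ∀ a, a ∈ l ↔ a < k + 1 := fun a => by rw [hperm.mem_iff, mem_range]
    have h0 : (0 : ℕ) ∈ l := (hmem 0).2 (by omega)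
    have hy : l.getLast? = some (l.getLast hne) := getLast?_eq_getLast hne
    have hy0 : l.getLast hne = 0 := by
      have := hPB 0 h0 (l.getLast hne) (by rw [hy]; rfl)
      omega
    have hsplit : l.dropLast ++ [0] = l := by
      rw [← hy0]; exact dropLast_append_getLast hne
    set w := l.dropLast with hw
    have hwl : ∀ x ∈ w, x ∈ l := fun x hx => (dropLast_sublist l).subset hx
    have h0w : (0 : ℕ) ∉ w := by
      intro h0w
      have : w.Nodup ∧ _ ∧ w.Disjoint [0] := nodup_append'.1 (hsplit ▸ hnd)
      exact (disjoint_left.1 this.2.2) h0w (by simp)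
    have hw1 : ∀ x ∈ w, 1 ≤ x := by
      intro x hx
      rcases Nat.eq_zero_or_pos x with rfl | h
      · exact absurd hx h0w
      · exact h
    have hmapw : (w.map (fun x => x - 1)).map (· + 1) = w := by
      rw [map_map]
      have : ∀ a ∈ w, ((fun x => x + 1) ∘ fun x => x - 1) a = id a := by
        intro a ha
        have := hw1 a ha
        simp only [Function.comp_apply, id_eq]
        omega
      rw [map_congr_left this, map_id]
    set u := w.map (fun x => x - 1) with hu
    have hund : u.Nodup := by
      have hwnd : w.Nodup := (nodup_append'.1 (hsplit ▸ hnd)).1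
      exact hwnd.map_on (fun x hx y hy hxy => by
        have := hw1 x hx; have := hw1 y hy; omega)
    have humem : ∀ a, a ∈ u ↔ a < k := by
      intro a
      constructor
      · rintro ha
        obtain ⟨b, hb, rfl⟩ := mem_map.1 ha
        have hbl := (hmem b).1 (hwl b hb)
        have hb1 := hw1 b hb
        rcases eq_or_lt_of_le hb1 with h | h
        · omega
        · -- b ≥ 1; need b - 1 < k i.e. b < k+1 ✓ unless b = k+... fine
          omega
      · intro ha
        have : a + 1 ∈ l := (hmem _).2 (by omega)
        have : a + 1 ∈ w := by
          rcases (mem_append.1 (hsplit ▸ this : a + 1 ∈ w ++ [0])) with h | h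
          · exact h
          · simp at h
        exact mem_map.2 ⟨a + 1, this, by omega⟩
    have hupm : u ~ List.range k :=
      (perm_ext_iff_of_nodup hund (nodup_range)).2 (fun a => by rw [humem, mem_range])
    have havw : AvL w := by
      rw [← avl_concat_zero, hsplit]
      exact havl
    have havu : AvL u := by
      rw [← avl_shift 1, hmapw]
      exact havw
    refine ⟨⟨u, hupm, havu⟩, Subtype.ext ?_⟩
    show u.map (· + 1) ++ [0] = l
    rw [hu, hmapw, hsplit]

lemma split_at_unique {M : ℕ} : ∀ (A B T T' : List ℕ), M ∉ A → M ∉ B →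
    A ++ M :: T = B ++ M :: T' → A = B ∧ T = T' := by
  intro A
  induction A with
  | nil =>
    intro B T T' _ hB h
    cases B with
    | nil => simpa using h
    | cons b B =>
      exfalso
      obtain ⟨hMb, -⟩ : M = b ∧ T = B ++ M :: T' := by simpa using h
      exact hB (by simp [hMb])
  | cons a A ih =>
    intro B T T' hA hB h
    cases B with
    | nil =>
      exfalso
      obtain ⟨haM, -⟩ : a = M ∧ A ++ M :: T = T' := by simpa using h
      exact hA (by simp [haM])
    | cons b B =>
      obtain ⟨hab, h2⟩ : a = b ∧ A ++ M :: T = B ++ M :: T' := by simpa using h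
      obtain ⟨h3, h4⟩ := ih B T T' (fun hMA => hA (mem_cons_of_mem _ hMA))
        (fun hMB => hB (mem_cons_of_mem _ hMB)) h2
      exact ⟨by rw [hab, h3], h4⟩

lemma card_PA_succ (n : ℕ) :
    Nat.card (PA (n+1)) = ∑ k : Fin (n+1), Nat.card (PB k) * Nat.card (PA (n - k)) := by
  have key : Nat.card (PA (n+1)) = Nat.card (Σ k : Fin (n+1), PB (k:ℕ) × PA (n - (k:ℕ))) := by
    symm
    have hprop : ∀ (k : Fin (n+1)) (s t : List ℕ),
        ((s ~ List.range (k:ℕ) ∧ AvL s) ∧ PBcond s) →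
        (t ~ List.range (n - (k:ℕ)) ∧ AvL t) →
        ((s.map (· + (n - (k:ℕ))) ++ n :: t) ~ List.range (n+1) ∧
          AvL (s.map (· + (n - (k:ℕ))) ++ n :: t)) := by
      rintro k s t ⟨⟨hsp, hsa⟩, hsPB⟩ ⟨htp, hta⟩
      set m := n - (k:ℕ) with hm
      have hkn : (k:ℕ) ≤ n := Nat.lt_succ_iff.1 k.isLt
      have hkm : (k:ℕ) + m = n := by omega
      have hsmem : ∀ a ∈ s, a < (k:ℕ) := fun a ha => mem_range.1 (hsp.mem_iff.1 ha)
      have htmem : ∀ a, a ∈ t ↔ a < m := fun a => by rw [htp.mem_iff, mem_range]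
      have hs'mem : ∀ a ∈ s.map (· + m), m ≤ a ∧ a < n := by
        intro a ha
        obtain ⟨b, hb, rfl⟩ := mem_map.1 ha
        have := hsmem b hb
        omega
      have hsnd : s.Nodup := hsp.nodup_iff.2 (nodup_range)
      have htnd : t.Nodup := htp.nodup_iff.2 (nodup_range)
      have hs'a : AvL (s.map (· + m)) := (avl_shift m s).2 hsa
      have hcross : ∀ x ∈ s.map (· + m), ∀ z ∈ t, z < x := by
        intro x hx z hz
        have h1 := (hs'mem x hx).1
        have h2 := (htmem z).1 hz
        omega
      have hsM : ∀ x ∈ s.map (· + m), x < n := fun x hx => (hs'mem x hx).2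
      have htM : ∀ z ∈ t, z < n := fun z hz => by have := (htmem z).1 hz; omega
      have hPB' : PBcond (s.map (· + m)) := by
        intro x hx y hy
        rw [getLast?_map] at hy
        obtain ⟨b, hb, rfl⟩ := mem_map.1 hx
        cases hgl : s.getLast? with
        | none => rw [hgl] at hy; simp at hy
        | some y₀ =>
          rw [hgl] at hy
          simp only [Option.map_some, Option.mem_def, Option.some.injEq] at hy
          subst hy
          have := hsPB b hb y₀ (by rw [hgl]; rfl)
          omega
      constructor
      · rw [perm_ext_iff_of_nodup ?_ (nodup_range)]
        · intro a
          simp only [mem_append, mem_map, mem_cons, mem_range]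
          constructor
          · rintro (⟨b, hb, rfl⟩ | rfl | h)
            · have := hsmem b hb; omega
            · omega
            · have := (htmem a).1 h; omega
          · intro ha
            rcases Nat.lt_or_ge a m with h | h
            · right; right; exact (htmem a).2 h
            · rcases Nat.lt_or_ge a n with h2 | h2
              · left; exact ⟨a - m, hsp.mem_iff.2 (mem_range.2 (by omega)), by omega⟩
              · right; left; omega
        · rw [nodup_append']
          refine ⟨hsnd.map (fun a b hab => by omega), ?_, ?_⟩
          · rw [nodup_cons]
            exact ⟨fun h => by have := (htmem n).1 h; omega, htnd⟩
          · intro a ha hb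
            have h1 := hs'mem a ha
            rcases mem_cons.1 hb with rfl | hb
            · omega
            · have := (htmem a).1 hb; omega
      · exact ⟨glue_pat132 hs'a.1 hta.1 hcross hsM htM,
          glue_pat1_23 hs'a.2 hta.2 hcross htM hPB'⟩
    apply Nat.card_eq_of_bijective (fun x : Σ k : Fin (n+1), PB (k:ℕ) × PA (n - (k:ℕ)) =>
      (⟨x.2.1.1.map (· + (n - (x.1:ℕ))) ++ n :: x.2.2.1,
        hprop x.1 x.2.1.1 x.2.2.1 x.2.1.2 x.2.2.2⟩ : PA (n+1)))
    constructor
    · rintro ⟨k, ⟨s, hs⟩, ⟨t, ht⟩⟩ ⟨k', ⟨s', hs'⟩, ⟨t', ht'⟩⟩ h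
      simp only [Subtype.mk.injEq] at h
      have hkn : (k:ℕ) ≤ n := Nat.lt_succ_iff.1 k.isLt
      have hkn' : (k':ℕ) ≤ n := Nat.lt_succ_iff.1 k'.isLt
      have hnots : n ∉ s.map (· + (n - (k:ℕ))) := by
        intro hmem
        obtain ⟨b, hb, hbe⟩ := mem_map.1 hmem
        have := mem_range.1 (hs.1.1.mem_iff.1 hb)
        omega
      have hnots' : n ∉ s'.map (· + (n - (k':ℕ))) := by
        intro hmem
        obtain ⟨b, hb, hbe⟩ := mem_map.1 hmem
        have := mem_range.1 (hs'.1.1.mem_iff.1 hb)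
        omega
      obtain ⟨h1, rfl⟩ := split_at_unique _ _ _ _ hnots hnots' h
      have hkk : k = k' := by
        have e1 := ht.1.length_eq
        have e2 := ht'.1.length_eq
        simp only [length_range] at e1 e2
        apply Fin.ext
        omega
      subst hkk
      have hss : s = s' := map_injective_iff.2 (fun a b hab => by omega) h1
      subst hss
      rfl
    · rintro ⟨l, hperm, havl⟩
      have hnl : n ∈ l := hperm.mem_iff.2 (mem_range.2 (by omega))
      obtain ⟨s, t, rfl⟩ := append_of_mem hnl
      have hnd : (s ++ n :: t).Nodup := hperm.nodup_iff.2 (nodup_range)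
      have hmem : ∀ a, a ∈ s ++ n :: t ↔ a < n + 1 := fun a => by
        rw [hperm.mem_iff, mem_range]
      obtain ⟨hsnd, hntnd, hdisj⟩ := nodup_append'.1 hnd
      have hns : n ∉ s := fun h => (disjoint_left.1 hdisj) h (by simp)
      have hnt : n ∉ t := (nodup_cons.1 hntnd).1
      have htnd : t.Nodup := (nodup_cons.1 hntnd).2
      have hsval : ∀ x ∈ s, x < n := by
        intro x hx
        have h1 := (hmem x).1 (mem_append_left _ hx)
        have h2 : x ≠ n := fun h => hns (h ▸ hx)
        omega
      have htval : ∀ z ∈ t, z < n := by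
        intro z hz
        have h1 := (hmem z).1 (mem_append_right _ (mem_cons_of_mem _ hz))
        have h2 : z ≠ n := fun h => hnt (h ▸ hz)
        omega
      have hst : ∀ x ∈ s, ∀ z ∈ t, z < x := by
        intro x hx z hz
        by_contra hcon
        push_neg at hcon
        have hne : x ≠ z := fun h => (disjoint_left.1 hdisj) hx (h ▸ mem_cons_of_mem _ hz)
        have hxz : x < z := by omega
        exact havl.1 ⟨x, n, z,
          Sublist.append (singleton_sublist.2 hx) ((singleton_sublist.2 hz).cons₂ n),
          hxz, htval z hz⟩
      have havls : AvL s :=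
        ⟨fun h => havl.1 (pat132_of_sublist (sublist_append_left _ _) h),
         fun h => havl.2 (pat1_23_append_right h)⟩
      have havlt : AvL t := by
        constructor
        · intro h
          exact havl.1 (pat132_of_sublist
            ((List.sublist_cons_self n t).trans (List.sublist_append_right s (n :: t))) h)
        · intro h
          have := pat1_23_append_left (s := s ++ [n]) h
          rw [append_assoc] at this
          exact havl.2 (by simpa using this)
      have hPBs : PBcond s := by
        intro x hx y hy
        by_contra hcon
        push_neg at hcon
        have hne : s ≠ [] := by rintro rfl; simp at hx
        have hyl : s.getLast hne = y := by
          rw [getLast?_eq_getLast hne] at hy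
          simpa using hy
        have hsplit : s.dropLast ++ [y] = s := by
          rw [← hyl]; exact dropLast_append_getLast hne
        have hxdl : x ∈ s.dropLast := by
          have h2 : x ∈ s.dropLast ++ [y] := by rw [hsplit]; exact hx
          rcases mem_append.1 h2 with h2 | h2
          · exact h2
          · simp at h2; omega
        refine havl.2 ⟨x, y, n, s.dropLast, t, ?_, hxdl, hcon, hsval y (mem_of_mem_getLast? hy)⟩
        conv_lhs => rw [← hsplit]
        rw [append_assoc]
        rfl
      set m := t.length with hm
      have hmn : m ≤ n := by
        have hsub : t ⊆ List.range n := fun z hz => mem_range.2 (htval z hz)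
        have := (htnd.subperm hsub).length_le
        simpa using this
      have hsm : ∀ x ∈ s, m ≤ x := by
        intro x hx
        by_contra hcon
        push_neg at hcon
        have hsub : t ⊆ List.range x := fun z hz => mem_range.2 (hst x hx z hz)
        have := (htnd.subperm hsub).length_le
        simp at this
        omega
      have hrsub : ∀ a, a < m → a ∈ t := by
        intro a ha
        have hal : a ∈ s ++ n :: t := (hmem a).2 (by omega)
        rcases mem_append.1 hal with h | h
        · exact absurd ha (by have := hsm a h; omega)
        · rcases mem_cons.1 h with h | h
          · omega
          · exact h
      have htmem : ∀ z, z ∈ t ↔ z < m := by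
        intro z
        refine ⟨fun hz => ?_, hrsub z⟩
        by_contra hcon
        push_neg at hcon
        have hsub : z :: List.range m ⊆ t := by
          intro a ha
          rcases mem_cons.1 ha with rfl | ha
          · exact hz
          · exact hrsub a (mem_range.1 ha)
        have hnd' : (z :: List.range m).Nodup :=
          nodup_cons.2 ⟨by simp; omega, nodup_range⟩
        have := (hnd'.subperm hsub).length_le
        simp at this
        omega
      have hlen : s.length + t.length = n := by
        have := hperm.length_eq
        simp at this
        omega
      set k := s.length with hk
      have hkm : k + m = n := hlen
      have hsmem : ∀ x, x ∈ s ↔ (m ≤ x ∧ x < n) := by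
        intro x
        refine ⟨fun hx => ⟨hsm x hx, hsval x hx⟩, fun ⟨h1, h2⟩ => ?_⟩
        have hal : x ∈ s ++ n :: t := (hmem x).2 (by omega)
        rcases mem_append.1 hal with h | h
        · exact h
        · rcases mem_cons.1 h with rfl | h
          · omega
          · have := (htmem x).1 h; omega
      set u := s.map (fun x => x - m) with hu
      have hmaps : u.map (· + m) = s := by
        rw [hu, map_map]
        have : ∀ a ∈ s, ((· + m) ∘ fun x => x - m) a = id a := by
          intro a ha
          have := hsm a ha
          simp only [Function.comp_apply, id_eq]
          omega
        rw [map_congr_left this, map_id]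
      have hund : u.Nodup := hsnd.map_on (fun x hx y hy hxy => by
        have := hsm x hx; have := hsm y hy; omega)
      have humem : ∀ a, a ∈ u ↔ a < k := by
        intro a
        constructor
        · intro ha
          obtain ⟨b, hb, rfl⟩ := mem_map.1 ha
          have := (hsmem b).1 hb
          omega
        · intro ha
          exact mem_map.2 ⟨a + m, (hsmem _).2 (by omega), by omega⟩
      have hupm : u ~ List.range k :=
        (perm_ext_iff_of_nodup hund (nodup_range)).2 (fun a => by rw [humem, mem_range])
      have htpm : t ~ List.range m :=
        (perm_ext_iff_of_nodup htnd (nodup_range)).2 (fun a => by rw [htmem, mem_range])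
      have havlu : AvL u := by
        rw [← avl_shift m, hmaps]
        exact havls
      have hPBu : PBcond u := by
        intro x hx y hy
        have hxs : x + m ∈ s := by
          rw [← hmaps]
          exact mem_map.2 ⟨x, hx, rfl⟩
        have hys : s.getLast? = some (y + m) := by
          rw [← hmaps, getLast?_map]
          cases hgl : u.getLast? with
          | none => rw [hgl] at hy; simp at hy
          | some y₀ =>
            rw [hgl] at hy
            simp only [Option.mem_def, Option.some.injEq] at hy
            subst hy
            rfl
        have := hPBs (x + m) hxs (y + m) (by rw [hys]; rfl)
        omega
      refine ⟨⟨⟨k, by omega⟩, ⟨u, ⟨hupm, havlu⟩, hPBu⟩,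
        ⟨t, by simp only [Fin.val_mk]; rw [show n - k = m by omega]; exact htpm, havlt⟩⟩,
        Subtype.ext ?_⟩
      show u.map (· + (n - k)) ++ n :: t = s ++ n :: t
      rw [show n - k = m by omega, hmaps]
  rw [key]
  letI : ∀ k : Fin (n+1), Fintype (PB (k:ℕ) × PA (n - (k:ℕ))) := fun k => Fintype.ofFinite _
  rw [Nat.card_eq_fintype_card, Fintype.card_sigma]
  refine Finset.sum_congr rfl fun k _ => ?_
  rw [← Nat.card_eq_fintype_card, Nat.card_prod]

/-! ### transfer between `Equiv.Perm (Fin n)` and lists -/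

lemma triple_sublist_iff {α : Type*} (l : List α) (x y z : α) :
    [x, y, z] <+ l ↔ ∃ i j k : ℕ, i < j ∧ j < k ∧
      l[i]? = some x ∧ l[j]? = some y ∧ l[k]? = some z := by
  constructor
  · intro h
    rw [sublist_iff_exists_orderEmbedding_getElem?_eq] at h
    obtain ⟨f, hf⟩ := h
    exact ⟨f 0, f 1, f 2, f.strictMono (by omega), f.strictMono (by omega),
      by simpa using (hf 0).symm, by simpa using (hf 1).symm, by simpa using (hf 2).symm⟩
  · rintro ⟨i, j, k, hij, hjk, hi, hj, hk⟩
    obtain ⟨hkl, -⟩ := List.getElem?_eq_some_iff.1 hk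
    refine sublist_of_orderEmbedding_getElem?_eq
      (OrderEmbedding.ofStrictMono
        (fun t => if t = 0 then i else if t = 1 then j else if t = 2 then k
          else l.length + (t - 3)) ?_) ?_
    · intro a b hab
      dsimp only
      split_ifs <;> omega
    · intro ix
      match ix with
      | 0 => exact hi.symm
      | 1 => exact hj.symm
      | 2 => exact hk.symm
      | (t+3) =>
        show [x,y,z][t+3]? = l[if t+3 = 0 then i else if t+3 = 1 then j else if t+3 = 2 then k else l.length + (t+3-3)]?
        have h1 : ¬ (t+3 = 0) := by omega
        have h2 : ¬ (t+3 = 1) := by omega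
        have h3 : ¬ (t+3 = 2) := by omega
        rw [if_neg h1, if_neg h2, if_neg h3,
          show [x,y,z][t+3]? = none from rfl, eq_comm, getElem?_eq_none_iff]
        omega

lemma pat132_iff_perm {n : ℕ} (π : Equiv.Perm (Fin n)) :
    Pat132 (List.ofFn (fun i => (π i : ℕ))) ↔
      ∃ i j k : Fin n, i < j ∧ j < k ∧ π i < π k ∧ π k < π j := by
  constructor
  · rintro ⟨x, y, z, hsub, h1, h2⟩
    rw [triple_sublist_iff] at hsub
    obtain ⟨i, j, k, hij, hjk, hi, hj, hk⟩ := hsub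
    rw [List.getElem?_eq_some_iff] at hi hj hk
    obtain ⟨hi1, hi2⟩ := hi
    obtain ⟨hj1, hj2⟩ := hj
    obtain ⟨hk1, hk2⟩ := hk
    have hin : i < n := by simpa using hi1
    have hjn : j < n := by simpa using hj1
    have hkn : k < n := by simpa using hk1
    simp only [List.get_eq_getElem, List.getElem_ofFn] at hi2 hj2 hk2
    refine ⟨⟨i, hin⟩, ⟨j, hjn⟩, ⟨k, hkn⟩, hij, hjk, ?_, ?_⟩
    · show (π ⟨i, hin⟩ : ℕ) < (π ⟨k, hkn⟩ : ℕ)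
      omega
    · show (π ⟨k, hkn⟩ : ℕ) < (π ⟨j, hjn⟩ : ℕ)
      omega
  · rintro ⟨i, j, k, hij, hjk, h1, h2⟩
    refine ⟨(π i : ℕ), (π j : ℕ), (π k : ℕ), ?_, h1, h2⟩
    rw [triple_sublist_iff]
    refine ⟨i, j, k, hij, hjk, ?_, ?_, ?_⟩ <;>
      · rw [List.getElem?_eq_some_iff]
        refine ⟨by simpa using (Fin.is_lt _), ?_⟩
        simp [List.get_eq_getElem, List.getElem_ofFn]

lemma pat1_23_iff_perm {n : ℕ} (π : Equiv.Perm (Fin n)) :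
    Pat1_23 (List.ofFn (fun i => (π i : ℕ))) ↔
      ∃ (a b : Fin n) (h : (b : ℕ) + 1 < n), a < b ∧ π a < π b ∧ π b < π ⟨(b : ℕ) + 1, h⟩ := by
  set l := List.ofFn (fun i => (π i : ℕ)) with hl
  have hlen : l.length = n := by simp [hl]
  constructor
  · rintro ⟨x, u, v, p, q, heq, hx, h1, h2⟩
    have hplen : p.length + (q.length + 2) = n := by
      have := congrArg List.length heq
      simp [hlen] at this
      omega
    set b := p.length with hb
    have hbn : b + 1 < n := by omega
    obtain ⟨a0, ha0⟩ := mem_iff_getElem?.1 hx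
    obtain ⟨ha1, ha2⟩ := List.getElem?_eq_some_iff.1 ha0
    have hab : a0 < b := ha1
    have hgetb : l[b]? = some u := by
      rw [heq, getElem?_append_right (le_refl b)]
      rw [Nat.sub_self]; rfl
    have hgetb1 : l[b+1]? = some v := by
      rw [heq, getElem?_append_right (by omega : b ≤ b + 1)]
      rw [show b + 1 - b = 1 by omega]
      rfl
    have hgeta : l[a0]? = some x := by
      rw [heq, getElem?_append_left (by omega)]
      exact ha0
    obtain ⟨hb1', hb2⟩ := List.getElem?_eq_some_iff.1 hgetb
    obtain ⟨hb11', hb12⟩ := List.getElem?_eq_some_iff.1 hgetb1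
    obtain ⟨ha1', ha2'⟩ := List.getElem?_eq_some_iff.1 hgeta
    simp only [hl, List.get_eq_getElem, List.getElem_ofFn] at hb2 hb12 ha2'
    refine ⟨⟨a0, by omega⟩, ⟨b, by omega⟩, hbn, hab, ?_, ?_⟩
    · show (π ⟨a0, by omega⟩ : ℕ) < (π ⟨b, by omega⟩ : ℕ)
      omega
    · show (π ⟨b, by omega⟩ : ℕ) < (π ⟨b + 1, hbn⟩ : ℕ)
      omega
  · rintro ⟨a, b, h, hab, h1, h2⟩
    have hb1 : (b : ℕ) + 1 < l.length := by omega
    refine ⟨(π a : ℕ), l[(b : ℕ)]'(by omega), l[(b : ℕ)+1]'hb1, l.take b, l.drop ((b : ℕ)+2),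
      ?_, ?_, ?_, ?_⟩
    · conv_lhs => rw [← take_append_drop (b : ℕ) l]
      rw [drop_eq_getElem_cons (by omega), drop_eq_getElem_cons (by omega)]
    · rw [mem_take_iff_getElem]
      refine ⟨(a : ℕ), by simp [hlen]; omega, ?_⟩
      simp [hl, List.getElem_ofFn]
    · have : l[(b : ℕ)]'(by omega) = (π b : ℕ) := by
        simp [hl, List.getElem_ofFn]
      rw [this]
      exact h1
    · have e1 : l[(b : ℕ)]'(by omega) = (π b : ℕ) := by
        simp [hl, List.getElem_ofFn]
      have e2 : l[(b : ℕ)+1]'hb1 = (π ⟨(b : ℕ)+1, h⟩ : ℕ) := by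
        simp [hl, List.getElem_ofFn]
      rw [e1, e2]
      exact h2

lemma motzkin_iff {n : ℕ} (π : Equiv.Perm (Fin n)) :
    IsMotzkinPerm π ↔ AvL (List.ofFn (fun i => (π i : ℕ))) := by
  unfold IsMotzkinPerm Avoids132 Avoids1_23 AvL
  rw [pat132_iff_perm, pat1_23_iff_perm]

lemma card_motzkin_eq_PA (n : ℕ) :
    Nat.card {π : Equiv.Perm (Fin n) // IsMotzkinPerm π} = Nat.card (PA n) := by
  have hperm : ∀ π : Equiv.Perm (Fin n), (List.ofFn fun i => (π i : ℕ)) ~ List.range n := by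
    intro π
    rw [perm_ext_iff_of_nodup (nodup_ofFn.2 ?_) (nodup_range)]
    · intro a
      simp only [mem_ofFn, Set.mem_range, mem_range]
      constructor
      · rintro ⟨i, rfl⟩
        exact (π i).isLt
      · intro ha
        exact ⟨π.symm ⟨a, ha⟩, by simp⟩
    · intro i j hij
      exact π.injective (Fin.val_injective hij)
  apply Nat.card_eq_of_bijective (fun π : {π : Equiv.Perm (Fin n) // IsMotzkinPerm π} =>
    (⟨List.ofFn (fun i => (π.1 i : ℕ)), hperm π.1, (motzkin_iff π.1).1 π.2⟩ : PA n))
  constructor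
  · rintro ⟨π, hπ⟩ ⟨π', hπ'⟩ h
    simp only [Subtype.mk.injEq] at h
    have h2 := ofFn_injective h
    apply Subtype.ext
    apply Equiv.ext
    intro i
    exact Fin.val_injective (congrFun h2 i)
  · rintro ⟨l, hl, havl⟩
    have hlen : l.length = n := by simpa using hl.length_eq
    have hnd : l.Nodup := hl.nodup_iff.2 (nodup_range)
    have hval : ∀ (i : ℕ) (h : i < l.length), l[i] < n := by
      intro i h
      have : l[i] ∈ l := getElem_mem h
      exact mem_range.1 (hl.mem_iff.1 this)
    set g : Fin n → Fin n := fun i => ⟨l[(i : ℕ)]'(by omega), hval _ _⟩ with hg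
    have hginj : Function.Injective g := by
      intro i j hij
      simp only [hg, Fin.mk.injEq] at hij
      have := nodup_iff_injective_get.1 hnd
        (show l.get ⟨i, by omega⟩ = l.get ⟨j, by omega⟩ by simpa using hij)
      simpa [Fin.ext_iff] using this
    have hgbij := Finite.injective_iff_bijective.1 hginj
    refine ⟨⟨Equiv.ofBijective g hgbij, ?_⟩, Subtype.ext ?_⟩
    · rw [motzkin_iff]
      have : (List.ofFn fun i => ((Equiv.ofBijective g hgbij) i : ℕ)) = l := by
        apply List.ext_get (by simp [hlen])
        intro i h1 h2
        simp [Equiv.ofBijective, hg]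
      rw [this]
      exact havl
    · show (List.ofFn fun i => ((Equiv.ofBijective g hgbij) i : ℕ)) = l
      apply List.ext_get (by simp [hlen])
      intro i h1 h2
      simp [Equiv.ofBijective, hg]

lemma card_PA_eq_DA : ∀ n, Nat.card (PA n) = Nat.card (DA n) := by
  intro n
  induction n using Nat.strong_induction_on with
  | _ n ih =>
    match n, ih with
    | 0, _ => rw [card_PA_zero, card_DA_zero]
    | (m+1), ih =>
      rw [card_PA_succ, card_DA_succ]
      refine Finset.sum_congr rfl fun k _ => ?_
      have h2 : Nat.card (PA (m - (k:ℕ))) = Nat.card (DA (m - (k:ℕ))) := ih _ (by omega)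
      rw [h2]
      congr 1
      cases hkv : (k : ℕ) with
      | zero => rw [card_PB_zero, card_DB_zero]
      | succ j =>
        rw [card_PB_succ, card_DB_succ]
        exact ih j (by have := k.isLt; omega)

end MotzkinAux

/-- The number of Motzkin permutations of length `n` equals the number of Dyck paths
of length `2n` with no three consecutive up-steps. -/
theorem card_motzkin_perms_eq_card_dyck_no_triple_rise (n : ℕ) :
    Nat.card {π : Equiv.Perm (Fin n) // IsMotzkinPerm π} =
      Nat.card {D : List Bool // IsDyckPath D ∧ D.length = 2 * n ∧
        ¬ [true, true, true] <:+: D} := by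
  rw [MotzkinAux.card_motzkin_eq_PA, MotzkinAux.card_PA_eq_DA]
  rfl
end
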